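/- arXiv:2005.05449 — 7 statements merged into one kernel-verified Lean document; each statement's English description precedes it below -/
import Mathlib

section
/- Let P be a symmetric n×n matrix with spectral decomposition P = U diag(λ_P) U^T, and let R(P) = ||P||_tr + ι_C(P) where C = {P symmetric : 0 ⪯ P ⪯ I_n, tr(P) ≤ d}. Then for τ, α > 0, prox_{τα R}(P) = U diag(proj_{Q∩H}(λ_P − τα·1_n)) U^T, where Q = [0,1]^n and H = {x : ⟨x, 1_n⟩ ≤ d}. -/
open Matrix
open Classical

lemma frob (n : ℕ) (A : Matrix (Fin n) (Fin n) ℝ) :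
    ∑ i, ∑ j, (A i j)^2 = Matrix.trace (Aᵀ * A) := by
  simp [Matrix.trace, Matrix.mul_apply, Matrix.diag, sq]
  rw [Finset.sum_comm]

lemma trace_eq_sum_eig {n : ℕ} {A : Matrix (Fin n) (Fin n) ℝ} (hA : A.IsHermitian) :
    A.trace = ∑ i, hA.eigenvalues i := by
  simpa using hA.trace_eq_sum_eigenvalues

lemma psd_diag {n : ℕ} {A : Matrix (Fin n) (Fin n) ℝ} (hA : A.PosSemidef) (j : Fin n) :
    0 ≤ A j j := by
  have := hA.dotProduct_mulVec_nonneg (Pi.single j 1)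
  simpa [Matrix.mulVec_single, dotProduct, Pi.single_apply, Finset.sum_ite_eq] using this

lemma trace_conj {n : ℕ} {U : Matrix (Fin n) (Fin n) ℝ} (hU' : Uᵀ * U = 1)
    (X : Matrix (Fin n) (Fin n) ℝ) : (U * X * Uᵀ).trace = X.trace := by
  rw [Matrix.trace_mul_cycle, hU', Matrix.one_mul]

lemma frob_conj {n : ℕ} {U : Matrix (Fin n) (Fin n) ℝ} (hU' : Uᵀ * U = 1)
    (M : Matrix (Fin n) (Fin n) ℝ) :
    ∑ i, ∑ j, ((U * M * Uᵀ) i j)^2 = ∑ i, ∑ j, (M i j)^2 := by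
  rw [frob, frob]
  have h : (U * M * Uᵀ)ᵀ * (U * M * Uᵀ) = U * (Mᵀ * M) * Uᵀ := by
    have ht : (U * M * Uᵀ)ᵀ = U * Mᵀ * Uᵀ := by
      simp [Matrix.transpose_mul, Matrix.mul_assoc]
    rw [ht]
    have h2 : U * Mᵀ * Uᵀ * (U * M * Uᵀ) = U * Mᵀ * (Uᵀ * U) * M * Uᵀ := by noncomm_ring
    rw [h2, hU', Matrix.mul_one]
    noncomm_ring
  rw [h, trace_conj hU']

lemma diag_frob {n : ℕ} (v : Fin n → ℝ) :
    ∑ i, ∑ j, ((Matrix.diagonal v) i j)^2 = ∑ j, (v j)^2 := by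
  have h : ∀ i j : Fin n, ((Matrix.diagonal v) i j)^2 = if i = j then (v i)^2 else 0 := by
    intro i j; by_cases h : i = j <;> simp [Matrix.diagonal_apply, h]
  simp [h]

lemma sum_expand {n : ℕ} (c : ℝ) (lam x : Fin n → ℝ) :
    ∑ j, (lam j - c - x j)^2
      = ∑ j, (x j - lam j)^2 + 2*c*(∑ j, x j) - 2*c*(∑ j, lam j) + n*c^2 := by
  have h : ∀ j, (lam j - c - x j)^2
      = (x j - lam j)^2 + 2*c*(x j) - 2*c*(lam j) + c^2 := fun j => by ring
  rw [Finset.sum_congr rfl (fun j _ => h j)]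
  rw [Finset.sum_add_distrib, Finset.sum_sub_distrib, Finset.sum_add_distrib,
    ← Finset.mul_sum, ← Finset.mul_sum, Finset.sum_const, Finset.card_univ]
  simp [nsmul_eq_mul]

/-- The regularizer R(S) = ‖S‖_tr + ι_C(S), C = {0 ⪯ S ⪯ I, tr S ≤ d}, as an
extended-real-valued function on matrices (+∞ off C, and on C the sum of the absolute values
of the eigenvalues). -/
noncomputable def regR (n : ℕ) (d : ℝ) (S : Matrix (Fin n) (Fin n) ℝ) : EReal :=
  if h : S.PosSemidef ∧ (1 - S).PosSemidef ∧ S.trace ≤ d then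
    ((∑ i, |h.1.1.eigenvalues i| : ℝ) : EReal)
  else ⊤

/-- Proximal mapping of the regularizer: if P = U diag(λ) Uᵀ with U orthogonal, and μ is the
Euclidean projection of λ − τα·1 onto Q ∩ H (Q = [0,1]ⁿ, H = {x : ⟨x,1⟩ ≤ d}), then
S = U diag(μ) Uᵀ minimizes S ↦ τα R(S) + ½‖S − P‖²_F. -/
theorem stmt_10 (n : ℕ) (d τ α : ℝ) (hτ : 0 < τ) (hα : 0 < α)
    (U : Matrix (Fin n) (Fin n) ℝ) (hU : U * Uᵀ = 1)
    (lam μ : Fin n → ℝ)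
    (P : Matrix (Fin n) (Fin n) ℝ) (hP : P = U * Matrix.diagonal lam * Uᵀ)
    (hμmem : (∀ j, μ j ∈ Set.Icc (0 : ℝ) 1) ∧ (∑ j, μ j) ≤ d)
    (hμproj : ∀ y : Fin n → ℝ, (∀ j, y j ∈ Set.Icc (0 : ℝ) 1) → (∑ j, y j) ≤ d →
      (∑ j, (lam j - τ * α - μ j) ^ 2) ≤ ∑ j, (lam j - τ * α - y j) ^ 2) :
    ∀ S : Matrix (Fin n) (Fin n) ℝ,
      ((τ * α : ℝ) : EReal) * regR n d (U * Matrix.diagonal μ * Uᵀ) +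
          (((1 : ℝ) / 2) * ∑ i, ∑ j, ((U * Matrix.diagonal μ * Uᵀ) i j - P i j) ^ 2 : ℝ) ≤
        ((τ * α : ℝ) : EReal) * regR n d S +
          (((1 : ℝ) / 2) * ∑ i, ∑ j, (S i j - P i j) ^ 2 : ℝ) := by
  intro S
  have hU' : Uᵀ * U = 1 := mul_eq_one_comm.mp hU
  have hc0 : 0 < τ * α := mul_pos hτ hα
  set Shat := U * Matrix.diagonal μ * Uᵀ with hShat
  -- Shat ∈ C
  have hShat_psd : Shat.PosSemidef := by
    have hd0 : (0 : Fin n → ℝ) ≤ μ := fun j => by simpa using (hμmem.1 j).1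
    have := (Matrix.PosSemidef.diagonal hd0).mul_mul_conjTranspose_same U
    simpa using this
  have hShat_sub : (1 : Matrix (Fin n) (Fin n) ℝ) - Shat
      = U * Matrix.diagonal (fun j => 1 - μ j) * Uᵀ := by
    have hd : Matrix.diagonal (fun j => 1 - μ j)
        = 1 - Matrix.diagonal μ := by
      rw [← Matrix.diagonal_one, ← Matrix.diagonal_sub]
    rw [hd, Matrix.mul_sub, Matrix.mul_one, Matrix.sub_mul, hU, hShat]
  have hShat_psd1 : ((1 : Matrix (Fin n) (Fin n) ℝ) - Shat).PosSemidef := by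
    rw [hShat_sub]
    have hd0 : (0 : Fin n → ℝ) ≤ fun j => 1 - μ j := fun j => by
      simpa using sub_nonneg.mpr (hμmem.1 j).2
    have := (Matrix.PosSemidef.diagonal hd0).mul_mul_conjTranspose_same U
    simpa using this
  have hShat_tr : Shat.trace = ∑ j, μ j := by
    rw [hShat, trace_conj hU', Matrix.trace_diagonal]
  have hShatC : Shat.PosSemidef ∧ ((1:Matrix (Fin n) (Fin n) ℝ) - Shat).PosSemidef ∧ Shat.trace ≤ d :=
    ⟨hShat_psd, hShat_psd1, by rw [hShat_tr]; exact hμmem.2⟩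
  have hreg1 : regR n d Shat = ((∑ j, μ j : ℝ) : EReal) := by
    rw [regR, dif_pos hShatC]
    congr 1
    rw [Finset.sum_congr rfl (fun i _ => abs_of_nonneg (hShat_psd.eigenvalues_nonneg i))]
    rw [← trace_eq_sum_eig hShatC.1.1, hShat_tr]
  -- Frobenius term for Shat
  have hfrobShat : ∑ i, ∑ j, (Shat i j - P i j) ^ 2 = ∑ j, (μ j - lam j)^2 := by
    have hM : Shat - P = U * Matrix.diagonal (fun j => μ j - lam j) * Uᵀ := by
      rw [hShat, hP, ← Matrix.diagonal_sub]
      rw [Matrix.mul_sub, Matrix.sub_mul]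
    have he : ∀ i j, Shat i j - P i j = (U * Matrix.diagonal (fun j => μ j - lam j) * Uᵀ) i j := by
      intro i j; rw [← hM]; simp [Matrix.sub_apply]
    calc ∑ i, ∑ j, (Shat i j - P i j) ^ 2
        = ∑ i, ∑ j, ((U * Matrix.diagonal (fun j => μ j - lam j) * Uᵀ) i j) ^ 2 := by
          exact Finset.sum_congr rfl fun i _ => Finset.sum_congr rfl fun j _ => by rw [he]
      _ = ∑ j, (μ j - lam j)^2 := by rw [frob_conj hU', diag_frob]
  by_cases hS : S.PosSemidef ∧ ((1:Matrix (Fin n) (Fin n) ℝ) - S).PosSemidef ∧ S.trace ≤ d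
  · -- S ∈ C : real inequality
    have hregS : regR n d S = ((S.trace : ℝ) : EReal) := by
      rw [regR, dif_pos hS]
      congr 1
      rw [Finset.sum_congr rfl (fun i _ => abs_of_nonneg (hS.1.eigenvalues_nonneg i))]
      rw [← trace_eq_sum_eig hS.1.1]
    rw [hreg1, hregS, ← EReal.coe_mul, ← EReal.coe_mul, ← EReal.coe_add, ← EReal.coe_add,
      EReal.coe_le_coe_iff]
    -- set up T and y
    set T := Uᵀ * S * U with hT
    set y : Fin n → ℝ := fun j => T j j with hy
    have hT_psd : T.PosSemidef := by
      have := hS.1.conjTranspose_mul_mul_same U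
      simpa using this
    have h1T : (1 : Matrix (Fin n) (Fin n) ℝ) - T = Uᵀ * ((1:Matrix (Fin n) (Fin n) ℝ) - S) * U := by
      rw [Matrix.mul_sub, Matrix.sub_mul, Matrix.mul_one, hU', hT]
    have hT1_psd : ((1 : Matrix (Fin n) (Fin n) ℝ) - T).PosSemidef := by
      rw [h1T]
      have := hS.2.1.conjTranspose_mul_mul_same U
      simpa using this
    have hy01 : ∀ j, y j ∈ Set.Icc (0:ℝ) 1 := by
      intro j
      refine ⟨psd_diag hT_psd j, ?_⟩
      have := psd_diag hT1_psd j
      simp only [Matrix.sub_apply, Matrix.one_apply_eq] at this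
      linarith
    have hTtr : T.trace = S.trace := by
      rw [hT, Matrix.trace_mul_cycle, hU, Matrix.one_mul]
    have hysum : ∑ j, y j = S.trace := by
      rw [← hTtr]; rfl
    have hyd : ∑ j, y j ≤ d := by rw [hysum]; exact hS.2.2
    -- S = U T Uᵀ and Frobenius of S - P
    have hSUT : S = U * T * Uᵀ := by
      rw [hT]
      calc S = (U * Uᵀ) * S * (U * Uᵀ) := by rw [hU, Matrix.one_mul, Matrix.mul_one]
        _ = U * (Uᵀ * S * U) * Uᵀ := by noncomm_ring
    have hfrobS : ∑ i, ∑ j, (S i j - P i j) ^ 2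
        = ∑ i, ∑ j, ((T - Matrix.diagonal lam) i j) ^ 2 := by
      have hM : S - P = U * (T - Matrix.diagonal lam) * Uᵀ := by
        rw [hP, Matrix.mul_sub, Matrix.sub_mul, ← hSUT]
      have he : ∀ i j, S i j - P i j = (U * (T - Matrix.diagonal lam) * Uᵀ) i j := by
        intro i j; rw [← hM]; simp [Matrix.sub_apply]
      calc ∑ i, ∑ j, (S i j - P i j) ^ 2
          = ∑ i, ∑ j, ((U * (T - Matrix.diagonal lam) * Uᵀ) i j) ^ 2 :=
            Finset.sum_congr rfl fun i _ => Finset.sum_congr rfl fun j _ => by rw [he]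
        _ = _ := frob_conj hU' _
    have hdiagbound : ∑ j, (y j - lam j)^2 ≤ ∑ i, ∑ j, ((T - Matrix.diagonal lam) i j) ^ 2 := by
      apply Finset.sum_le_sum
      intro i _
      have h1 : ((T - Matrix.diagonal lam) i i)^2 ≤ ∑ j, ((T - Matrix.diagonal lam) i j) ^ 2 :=
        Finset.single_le_sum (f := fun j => ((T - Matrix.diagonal lam) i j)^2)
          (fun j _ => sq_nonneg _) (Finset.mem_univ i)
      simpa [Matrix.sub_apply, Matrix.diagonal_apply_eq] using h1
    -- projection inequality
    have hproj := hμproj y hy01 hyd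
    rw [sum_expand, sum_expand] at hproj
    rw [hfrobShat, hfrobS, ← hysum]
    nlinarith [hproj, hdiagbound]
  · -- S ∉ C : RHS = ⊤
    rw [hreg1, regR, dif_neg hS]
    have htop : ((τ * α : ℝ) : EReal) * (⊤ : EReal) = ⊤ :=
      EReal.coe_mul_top_of_pos hc0
    rw [htop, EReal.top_add_coe]
    exact le_top
end

section
/- For symmetric matrices A and B (with eigenvalues in descending order λ(A), λ(B)), the Hoffman–Wielandt inequality holds: ||A − B||²_F ≥ ||λ(A) − λ(B)||²₂. -/
open Matrix Finset

lemma trace_mul_le_sum {n : ℕ} (A B : Matrix (Fin n) (Fin n) ℝ)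
    (hA : A.IsHermitian) (hB : B.IsHermitian)
    (μ ν : Fin n → ℝ) (σA σB : Equiv.Perm (Fin n))
    (hμ : μ = hA.eigenvalues ∘ σA) (hν : ν = hB.eigenvalues ∘ σB)
    (hμd : Antitone μ) (hνd : Antitone ν) :
    (A * B).trace ≤ ∑ i, μ i * ν i := by
  set dA := hA.eigenvalues with hdA
  set dB := hB.eigenvalues with hdB
  set U : Matrix (Fin n) (Fin n) ℝ := (hA.eigenvectorUnitary : Matrix (Fin n) (Fin n) ℝ) with hUdef
  set V : Matrix (Fin n) (Fin n) ℝ := (hB.eigenvectorUnitary : Matrix (Fin n) (Fin n) ℝ) with hVdef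
  have hU1 : star U * U = 1 := Matrix.UnitaryGroup.star_mul_self hA.eigenvectorUnitary
  have hU2 : U * star U = 1 := mem_unitaryGroup_iff.mp hA.eigenvectorUnitary.2
  have hV1 : star V * V = 1 := Matrix.UnitaryGroup.star_mul_self hB.eigenvectorUnitary
  have hV2 : V * star V = 1 := mem_unitaryGroup_iff.mp hB.eigenvectorUnitary.2
  have hspecA : A = U * diagonal dA * star U := by
    have := hA.spectral_theorem
    simpa [RCLike.ofReal_real_eq_id] using this
  have hspecB : B = V * diagonal dB * star V := by
    have := hB.spectral_theorem
    simpa [RCLike.ofReal_real_eq_id] using this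
  set W : Matrix (Fin n) (Fin n) ℝ := star U * V with hWdef
  have hsW : star W = star V * U := by
    rw [hWdef, Matrix.star_mul, star_star]
  have hW1 : W * star W = 1 := by
    rw [hWdef, hsW, Matrix.mul_assoc, ← Matrix.mul_assoc V, hV2, Matrix.one_mul, hU1]
  have hW2 : star W * W = 1 := by
    rw [hWdef, hsW, Matrix.mul_assoc, ← Matrix.mul_assoc U, hU2, Matrix.one_mul, hV1]
  -- trace formula
  have hABeq : A * B = U * (diagonal dA * (W * (diagonal dB * star W))) * star U := by
    conv_lhs => rw [hspecA, hspecB]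
    conv_rhs => rw [hWdef, hsW]
    simp only [Matrix.mul_assoc]
    rw [hU2, Matrix.mul_one]
  have htr : (A * B).trace = ∑ i, ∑ j, dA i * (W i j * (dB j * W i j)) := by
    rw [hABeq, Matrix.trace_mul_comm, ← Matrix.mul_assoc (star U) U, hU1, Matrix.one_mul,
      Matrix.trace]
    refine Finset.sum_congr rfl fun i _ => ?_
    rw [Matrix.diag_apply, Matrix.diagonal_mul, Matrix.mul_apply, Finset.mul_sum]
    refine Finset.sum_congr rfl fun j _ => ?_
    rw [Matrix.diagonal_mul, Matrix.star_apply, star_trivial]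
  set S : Matrix (Fin n) (Fin n) ℝ := Matrix.of (fun i j => W i j ^ 2) with hSdef
  have hS : S ∈ doublyStochastic ℝ (Fin n) := by
    rw [mem_doublyStochastic_iff_sum]
    refine ⟨fun i j => sq_nonneg _, fun i => ?_, fun j => ?_⟩
    · have h1 : (W * star W) i i = (1 : Matrix (Fin n) (Fin n) ℝ) i i := by rw [hW1]
      simpa [hSdef, Matrix.mul_apply, Matrix.star_apply, Matrix.one_apply, sq] using h1
    · have h1 : (star W * W) j j = (1 : Matrix (Fin n) (Fin n) ℝ) j j := by rw [hW2]
      simp only [Matrix.mul_apply, Matrix.star_apply, star_trivial, Matrix.one_apply_eq] at h1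
      simp only [hSdef, Matrix.of_apply, sq]
      rw [← h1]
  set c := ∑ i, μ i * ν i with hc
  have hlin : IsLinearMap ℝ (fun M : Matrix (Fin n) (Fin n) ℝ =>
      ∑ i, ∑ j, dA i * dB j * M i j) := by
    constructor
    · intro x y
      simp only [Matrix.add_apply, mul_add, Finset.sum_add_distrib]
    · intro r x
      simp only [Matrix.smul_apply, smul_eq_mul, Finset.mul_sum]
      exact Finset.sum_congr rfl fun i _ => Finset.sum_congr rfl fun j _ => by ring
  have hmono : Monovary μ ν := by
    intro i j h
    rcases le_total j i with hji | hij
    · exact hμd hji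
    · exact absurd (hνd hij) (not_le.2 h)
  have hperm : ∀ σ : Equiv.Perm (Fin n), ∑ i, ∑ j, dA i * dB j * σ.permMatrix ℝ i j ≤ c := by
    intro σ
    have e : ∑ i, ∑ j, dA i * dB j * σ.permMatrix ℝ i j = ∑ i, dA i * dB (σ i) := by
      refine Finset.sum_congr rfl fun i _ => ?_
      simp [Equiv.Perm.permMatrix, PEquiv.toMatrix_apply, Equiv.toPEquiv_apply, mul_ite,
        mul_one, mul_zero, Finset.sum_ite_eq, Option.mem_def]
    have e2 : ∑ i, dA i * dB (σ i) = ∑ k, μ k * ν ((σA.trans (σ.trans σB.symm)) k) := by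
      rw [← Equiv.sum_comp σA (fun i => dA i * dB (σ i))]
      refine Finset.sum_congr rfl fun k _ => ?_
      simp [hμ, hν, Function.comp, Equiv.trans_apply, Equiv.apply_symm_apply]
    rw [e, e2, hc]
    exact hmono.sum_mul_comp_perm_le_sum_mul
  have hSle : ∑ i, ∑ j, dA i * dB j * S i j ≤ c := by
    have hsub : {P | ∃ σ : Equiv.Perm (Fin n), σ.permMatrix ℝ = P} ⊆
        {M : Matrix (Fin n) (Fin n) ℝ | ∑ i, ∑ j, dA i * dB j * M i j ≤ c} := by
      rintro P ⟨σ, rfl⟩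
      exact hperm σ
    have hmono2 := convexHull_min hsub (convex_halfSpace_le hlin c)
    have hmem : S ∈ (doublyStochastic ℝ (Fin n) : Set (Matrix (Fin n) (Fin n) ℝ)) := hS
    rw [doublyStochastic_eq_convexHull_permMatrix] at hmem
    exact hmono2 hmem
  calc (A * B).trace = ∑ i, ∑ j, dA i * dB j * S i j := by
        rw [htr]
        exact Finset.sum_congr rfl fun i _ => Finset.sum_congr rfl fun j _ => by
          simp only [hSdef, Matrix.of_apply]; ring
    _ ≤ c := hSle

/-- trace of A*A in terms of eigenvalues -/
lemma trace_sq_eq {n : ℕ} (A : Matrix (Fin n) (Fin n) ℝ) (hA : A.IsHermitian) :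
    (A * A).trace = ∑ i, hA.eigenvalues i ^ 2 := by
  set U : Matrix (Fin n) (Fin n) ℝ := (hA.eigenvectorUnitary : Matrix (Fin n) (Fin n) ℝ) with hUdef
  have hU1 : star U * U = 1 := Matrix.UnitaryGroup.star_mul_self hA.eigenvectorUnitary
  have hspec : A = U * diagonal hA.eigenvalues * star U := by
    have := hA.spectral_theorem
    simpa [RCLike.ofReal_real_eq_id] using this
  have h2 : A * A = U * (diagonal hA.eigenvalues *
      (diagonal hA.eigenvalues * star U)) := by
    conv_lhs => rw [hspec]
    simp only [Matrix.mul_assoc]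
    rw [← Matrix.mul_assoc (star U) U, hU1, Matrix.one_mul]
  rw [h2, Matrix.trace_mul_comm]
  simp only [Matrix.mul_assoc]
  rw [hU1, Matrix.mul_one, Matrix.diagonal_mul_diagonal, Matrix.trace_diagonal]
  exact Finset.sum_congr rfl fun i _ => (sq _).symm


/-- Hoffman–Wielandt inequality: for symmetric matrices A, B with eigenvalue vectors μ, ν
listed in descending order, ‖A − B‖²_F ≥ ‖μ − ν‖²₂. -/
theorem stmt_11 (n : ℕ) (A B : Matrix (Fin n) (Fin n) ℝ)
    (hA : A.IsHermitian) (hB : B.IsHermitian)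
    (μ ν : Fin n → ℝ) (σA σB : Equiv.Perm (Fin n))
    (hμ : μ = hA.eigenvalues ∘ σA) (hν : ν = hB.eigenvalues ∘ σB)
    (hμd : Antitone μ) (hνd : Antitone ν) :
    (∑ i, (μ i - ν i) ^ 2) ≤ ∑ i, ∑ j, ((A - B) i j) ^ 2 := by
  have hABle := trace_mul_le_sum A B hA hB μ ν σA σB hμ hν hμd hνd
  have hAA : (A * A).trace = ∑ i, μ i ^ 2 := by
    rw [trace_sq_eq A hA, ← Equiv.sum_comp σA (fun i => hA.eigenvalues i ^ 2)]
    exact Finset.sum_congr rfl fun i _ => by rw [hμ]; rfl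
  have hBB : (B * B).trace = ∑ i, ν i ^ 2 := by
    rw [trace_sq_eq B hB, ← Equiv.sum_comp σB (fun i => hB.eigenvalues i ^ 2)]
    exact Finset.sum_congr rfl fun i _ => by rw [hν]; rfl
  have hsymm : (A - B)ᴴ = A - B := hA.sub hB
  have hRHS : ∑ i, ∑ j, ((A - B) i j) ^ 2 = (A * A).trace - 2 * (A * B).trace
      + (B * B).trace := by
    have h1 : ∑ i, ∑ j, ((A - B) i j) ^ 2 = ((A - B) * (A - B)).trace := by
      rw [Matrix.trace]
      refine Finset.sum_congr rfl fun i _ => ?_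
      rw [Matrix.diag_apply, Matrix.mul_apply]
      refine Finset.sum_congr rfl fun j _ => ?_
      have : (A - B) j i = (A - B) i j := by
        conv_lhs => rw [← hsymm]
        simp [Matrix.conjTranspose_apply]
      rw [this, sq]
    have h2 : (A - B) * (A - B) = A * A - A * B - B * A + B * B := by noncomm_ring
    rw [h1, h2, Matrix.trace_add, Matrix.trace_sub, Matrix.trace_sub,
      Matrix.trace_mul_comm B A]
    ring
  have hLHS : ∑ i, (μ i - ν i) ^ 2 =
      (∑ i, μ i ^ 2) - 2 * (∑ i, μ i * ν i) + ∑ i, ν i ^ 2 := by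
    have h : ∀ i, (μ i - ν i) ^ 2 = μ i ^ 2 - 2 * (μ i * ν i) + ν i ^ 2 := fun i => by ring
    simp_rw [h]
    rw [Finset.sum_add_distrib, Finset.sum_sub_distrib, Finset.mul_sum]
  rw [hLHS, hRHS, hAA, hBB]
  linarith
end

section
/- Let λ ∈ R^n, d ∈ (0,n], Q = [0,1]^n and H = {x ∈ R^n : ⟨x, 1_n⟩ ≤ d}. If ⟨proj_Q(λ), 1_n⟩ ≤ d, then proj_{Q∩H}(λ) = proj_Q(λ); otherwise proj_{Q∩H}(λ) = proj_Q(λ − t̂·1_n), where t̂ is the positive root of φ(t) = ⟨proj_Q(λ − t·1_n), 1_n⟩ − d. -/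
/-- Projection onto [0,1] (clamping) satisfies the variational inequality. -/
lemma clamp_cross (x y : ℝ) (hy0 : 0 ≤ y) (hy1 : y ≤ 1) :
    0 ≤ (x - max (min x 1) 0) * (max (min x 1) 0 - y) := by
  rcases le_total x 0 with h0 | h0
  · rw [min_eq_left (h0.trans zero_le_one), max_eq_right h0]
    nlinarith
  · rcases le_total 1 x with h1 | h1
    · rw [min_eq_right h1, max_eq_left zero_le_one]
      nlinarith
    · rw [min_eq_left h1, max_eq_left h0]
      nlinarith

/-- Projection onto the truncated hypercube Q ∩ H, Q = [0,1]ⁿ, H = {x : ⟨x,1⟩ ≤ d}: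
if the clipping proj_Q(λ) already satisfies the trace bound, it is the projection;
otherwise the projection is proj_Q(λ − t̂·1) where t̂ > 0 is a root of
φ(t) = ⟨proj_Q(λ − t·1), 1⟩ − d. -/
theorem stmt_12 (n : ℕ) (d : ℝ) (hd : 0 < d) (hdn : d ≤ n) (lam : Fin n → ℝ) :
    let clip : (Fin n → ℝ) → (Fin n → ℝ) := fun x j => max (min (x j) 1) 0
    let QH : Set (Fin n → ℝ) := {y | (∀ j, y j ∈ Set.Icc (0 : ℝ) 1) ∧ (∑ j, y j) ≤ d}
    let isProj : (Fin n → ℝ) → Prop := fun v =>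
      v ∈ QH ∧ ∀ y ∈ QH, (∑ j, (lam j - v j) ^ 2) ≤ ∑ j, (lam j - y j) ^ 2
    ((∑ j, clip lam j) ≤ d → isProj (clip lam)) ∧
    (¬ (∑ j, clip lam j) ≤ d →
      ∀ t : ℝ, 0 < t → (∑ j, clip (fun j => lam j - t) j) - d = 0 →
        isProj (clip (fun j => lam j - t))) := by
  intro clip QH isProj
  have hmem : ∀ x : Fin n → ℝ, ∀ j, clip x j ∈ Set.Icc (0 : ℝ) 1 := by
    intro x j
    exact ⟨le_max_right _ _, max_le (min_le_right _ _) zero_le_one⟩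
  constructor
  · intro hsum
    refine ⟨⟨hmem lam, hsum⟩, ?_⟩
    intro y hy
    apply Finset.sum_le_sum
    intro j _
    have h := clamp_cross (lam j) (y j) (hy.1 j).1 (hy.1 j).2
    simp only [clip]
    nlinarith [sq_nonneg (max (min (lam j) 1) 0 - y j)]
  · intro _ t ht hroot
    set v : Fin n → ℝ := clip (fun j => lam j - t) with hv
    have hvsum : (∑ j, v j) = d := by linarith [sub_eq_zero.mp hroot]
    refine ⟨⟨hmem _, by linarith⟩, ?_⟩
    intro y hy
    have key : ∀ j ∈ (Finset.univ : Finset (Fin n)),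
        2 * t * (v j - y j) ≤ (lam j - y j) ^ 2 - (lam j - v j) ^ 2 := by
      intro j _
      have h := clamp_cross (lam j - t) (y j) (hy.1 j).1 (hy.1 j).2
      have hvj : v j = max (min (lam j - t) 1) 0 := rfl
      rw [hvj]
      nlinarith [sq_nonneg (max (min (lam j - t) 1) 0 - y j)]
    have hsum := Finset.sum_le_sum key
    rw [Finset.sum_sub_distrib] at hsum
    have hlhs : (∑ j, 2 * t * (v j - y j)) = 2 * t * ((∑ j, v j) - ∑ j, y j) := by
      rw [← Finset.mul_sum, Finset.sum_sub_distrib]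
    rw [hlhs, hvsum] at hsum
    have hy2 : (∑ j, y j) ≤ d := hy.2
    nlinarith
end

section
/- Only the positive components of λ influence its projection onto Q ∩ H: proj_{Q∩H}(λ) = proj_{Q∩H}(λ₊), where λ₊ is the componentwise positive part of λ. -/
lemma sum_update_aux (n : ℕ) (F : Fin n → ℝ → ℝ) (p : Fin n → ℝ) (j : Fin n) (v : ℝ) :
    ∑ i, F i (Function.update p j v i)
      = (∑ i, F i (p i)) - F j (p j) + F j v := by
  classical
  have h1 : ∑ i, F i (Function.update p j v i)
      = F j v + ∑ i ∈ Finset.univ.erase j, F i (Function.update p j v i) := by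
    rw [← Finset.add_sum_erase Finset.univ (fun i => F i (Function.update p j v i))
      (Finset.mem_univ j), Function.update_self]
  have h2 : ∑ i ∈ Finset.univ.erase j, F i (Function.update p j v i)
      = ∑ i ∈ Finset.univ.erase j, F i (p i) := by
    apply Finset.sum_congr rfl
    intro i hi
    rw [Function.update_of_ne (Finset.ne_of_mem_erase hi)]
  have h3 : ∑ i, F i (p i) = F j (p j) + ∑ i ∈ Finset.univ.erase j, F i (p i) := by
    rw [← Finset.add_sum_erase Finset.univ (fun i => F i (p i)) (Finset.mem_univ j)]
  rw [h1, h2]; linarith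

/-- Only the positive components of λ influence the projection onto Q ∩ H:
the nearest point of Q ∩ H to λ coincides with the nearest point of Q ∩ H to λ₊. -/
theorem stmt_15 (n : ℕ) (d : ℝ) (hd : 0 < d) (lam : Fin n → ℝ) (p q : Fin n → ℝ) :
    let QH : Set (Fin n → ℝ) := {y | (∀ j, y j ∈ Set.Icc (0 : ℝ) 1) ∧ (∑ j, y j) ≤ d}
    let lamPlus : Fin n → ℝ := fun j => max (lam j) 0
    (p ∈ QH ∧ ∀ y ∈ QH, (∑ j, (lam j - p j) ^ 2) ≤ ∑ j, (lam j - y j) ^ 2) →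
    (q ∈ QH ∧ ∀ y ∈ QH, (∑ j, (lamPlus j - q j) ^ 2) ≤ ∑ j, (lamPlus j - y j) ^ 2) →
    p = q := by
  intro QH lamPlus hp hq
  classical
  -- feasibility of zeroing one coordinate
  have feas : ∀ (r : Fin n → ℝ), r ∈ QH → ∀ j, Function.update r j 0 ∈ QH := by
    intro r hr j
    constructor
    · intro i
      rcases eq_or_ne i j with h | h
      · subst h; simp [Set.mem_Icc]
      · rw [Function.update_of_ne h]; exact hr.1 i
    · refine le_trans (Finset.sum_le_sum ?_) hr.2
      intro i _
      rcases eq_or_ne i j with h | h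
      · subst h; simp; exact (hr.1 i).1
      · rw [Function.update_of_ne h]
  -- p vanishes on negative coordinates
  have hp0 : ∀ j, lam j < 0 → p j = 0 := by
    intro j hj
    have hopt := hp.2 _ (feas p hp.1 j)
    rw [sum_update_aux n (fun i t => (lam i - t)^2) p j 0] at hopt
    have hpj := (hp.1.1 j).1
    nlinarith [hopt, hpj, hj]
  have hq0 : ∀ j, lam j < 0 → q j = 0 := by
    intro j hj
    have hopt := hq.2 _ (feas q hq.1 j)
    rw [sum_update_aux n (fun i t => (lamPlus i - t)^2) q j 0] at hopt
    have hqj := (hq.1.1 j).1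
    have hlp : lamPlus j = 0 := by simp [lamPlus, max_eq_right hj.le]
    nlinarith [hopt, hqj]
  -- the two objectives differ by a constant on points vanishing at negative coords
  have key : ∀ (r : Fin n → ℝ), (∀ j, lam j < 0 → r j = 0) →
      ∑ j, (lam j - r j)^2
        = (∑ j, (lamPlus j - r j)^2) + ∑ j, (if lam j < 0 then (lam j)^2 else 0) := by
    intro r hr
    rw [← Finset.sum_add_distrib]
    apply Finset.sum_congr rfl
    intro j _
    by_cases h : lam j < 0
    · have h1 : r j = 0 := hr j h
      have h2 : lamPlus j = 0 := by simp [lamPlus, max_eq_right h.le]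
      simp [h, h1, h2]
    · have h2 : lamPlus j = lam j := by
        simp [lamPlus, max_eq_left (not_lt.mp h)]
      simp [h, h2]
  -- p is also a minimizer of the lamPlus objective
  have h1 : ∑ j, (lamPlus j - q j)^2 ≤ ∑ j, (lamPlus j - p j)^2 := hq.2 p hp.1
  have h2 : ∑ j, (lam j - p j)^2 ≤ ∑ j, (lam j - q j)^2 := hp.2 q hq.1
  rw [key p hp0, key q hq0] at h2
  have heq : ∑ j, (lamPlus j - p j)^2 = ∑ j, (lamPlus j - q j)^2 := le_antisymm (by linarith) h1
  -- midpoint argument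
  set m : Fin n → ℝ := fun j => (p j + q j)/2 with hm
  have hmQH : m ∈ QH := by
    constructor
    · intro i
      have h3 := hp.1.1 i; have h4 := hq.1.1 i
      simp only [Set.mem_Icc] at h3 h4 ⊢
      constructor <;> · simp only [hm]; linarith [h3.1, h3.2, h4.1, h4.2]
    · have : ∑ j, m j = ((∑ j, p j) + ∑ j, q j)/2 := by
        simp only [hm]
        rw [← Finset.sum_add_distrib, Finset.sum_div]
      rw [this]; linarith [hp.1.2, hq.1.2]
  have hmid : ∑ j, (lamPlus j - m j)^2
      = ((∑ j, (lamPlus j - p j)^2) + ∑ j, (lamPlus j - q j)^2)/2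
        - (∑ j, (p j - q j)^2)/4 := by
    have : ∀ j : Fin n, (lamPlus j - m j)^2
        = ((lamPlus j - p j)^2 + (lamPlus j - q j)^2)/2 - (p j - q j)^2/4 := by
      intro j; simp only [hm]; ring
    rw [Finset.sum_congr rfl (fun j _ => this j)]
    rw [Finset.sum_sub_distrib, ← Finset.sum_div, ← Finset.sum_div, Finset.sum_add_distrib]
  have h5 : ∑ j, (lamPlus j - q j)^2 ≤ ∑ j, (lamPlus j - m j)^2 := hq.2 m hmQH
  have h6 : ∑ j, (p j - q j)^2 ≤ 0 := by rw [hmid] at h5; linarith [heq]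
  funext j
  have h7 : (p j - q j)^2 = 0 := by
    have := (Finset.sum_eq_zero_iff_of_nonneg (fun i _ => sq_nonneg (p i - q i))).mp
      (le_antisymm h6 (Finset.sum_nonneg (fun i _ => sq_nonneg (p i - q i))))
    exact this j (Finset.mem_univ j)
  nlinarith [h7]
end

section
/- Let Π_L be the orthogonal projector onto a d_L-dimensional subspace L of R^n, and let x_1,…,x_N ∈ R^n with N ≥ d_L. Define the permeance statistic P_L = min over unit vectors u ∈ L of Σ_k |⟨u, x_k⟩|. Then for any matrix A ∈ R^{n,n}: Σ_{k=1}^N ||A Π_L x_k||₂ ≥ P_L · ||A Π_L||_F ≥ (P_L / √d_L) · ||A Π_L||_tr. -/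
open Matrix
set_option maxHeartbeats 1000000


lemma dot_shift {n : ℕ} (B : Matrix (Fin n) (Fin n) ℝ) (a b : Fin n → ℝ) :
    ∑ i, (B *ᵥ a) i * b i = ∑ j, a j * (Bᵀ *ᵥ b) j := by
  simp only [Matrix.mulVec, dotProduct, Matrix.transpose_apply,
    Finset.sum_mul, Finset.mul_sum]
  rw [Finset.sum_comm]
  congr 1; ext i; congr 1; ext j; ring

lemma trace_eq_sum_eig_s16 {n : ℕ} {B : Matrix (Fin n) (Fin n) ℝ} (hB : B.IsHermitian) :
    B.trace = ∑ i, hB.eigenvalues i := by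
  rw [hB.trace_eq_sum_eigenvalues]
  simp

lemma norm_mulVec_sq {n : ℕ} (M : Matrix (Fin n) (Fin n) ℝ) (y : Fin n → ℝ) :
    ∑ i, ((M *ᵥ y) i)^2 =
      ∑ i, (Matrix.isHermitian_conjTranspose_mul_self M).eigenvalues i *
        (∑ j, (Matrix.isHermitian_conjTranspose_mul_self M).eigenvectorBasis i j * y j)^2 := by
  set hH := Matrix.isHermitian_conjTranspose_mul_self M with hHdef
  set v := hH.eigenvectorBasis with hv
  set μ := hH.eigenvalues with hμ
  have hHt : (Mᴴ * M)ᵀ = Mᴴ * M := by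
    conv_rhs => rw [← hH.eq]
    ext i j; simp [Matrix.conjTranspose_apply]
  have h1 : ∑ i, ((M *ᵥ y) i)^2 = ∑ j, y j * ((Mᴴ * M) *ᵥ y) j := by
    have hMt : Mᵀ = Mᴴ := by ext i j; simp
    have h := dot_shift M y (M *ᵥ y)
    rw [hMt, Matrix.mulVec_mulVec] at h
    simpa [pow_two] using h
  have h2 : ∀ i, ∑ j, v i j * ((Mᴴ * M) *ᵥ y) j = μ i * ∑ j, v i j * y j := by
    intro i
    have h := dot_shift (Mᴴ * M) (⇑(v i)) y
    rw [hHt, hH.mulVec_eigenvectorBasis i] at h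
    rw [← h]
    simp [Pi.smul_apply, smul_eq_mul, Finset.mul_sum, mul_assoc]
    rfl
  have h3 : ∑ j, y j * ((Mᴴ * M) *ᵥ y) j
      = ∑ i, (∑ j, y j * v i j) * (∑ j, v i j * ((Mᴴ * M) *ᵥ y) j) := by
    have h := v.sum_inner_mul_inner (WithLp.toLp 2 y)
      (WithLp.toLp 2 ((Mᴴ * M) *ᵥ y : Fin n → ℝ))
    simp only [PiLp.inner_apply, RCLike.inner_apply', starRingEnd_apply, star_trivial,
      PiLp.toLp_apply] at h
    exact h.symm
  rw [h1, h3]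
  congr 1; ext i
  rw [h2 i]
  have : ∑ j, y j * v i j = ∑ j, v i j * y j := by congr 1; ext j; ring
  rw [this]; ring


/-- Nuclear norm (sum of singular values) of a real matrix M, as the sum of the square roots
of the eigenvalues of M Mᵀ. -/
noncomputable def nucNorm (n : ℕ) (M : Matrix (Fin n) (Fin n) ℝ) : ℝ :=
  ∑ i, Real.sqrt ((Matrix.isHermitian_mul_conjTranspose_self M).eigenvalues i)

/-- Permeance lemma: with Pr_L the orthogonal projector onto a d_L-dimensional subspace L,
data points x₁,…,x_N (N ≥ d_L), and the permeance statistic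
P_L = inf over unit u ∈ L of Σ_k |⟨u,x_k⟩|, for any A:
Σ_k ‖A Pr_L x_k‖₂ ≥ P_L ‖A Pr_L‖_F ≥ (P_L/√d_L) ‖A Pr_L‖_tr. -/
theorem stmt_16 (n N dL : ℕ) (hdL : 0 < dL) (hN : dL ≤ N)
    (Pr : Matrix (Fin n) (Fin n) ℝ) (hPr : Pr.IsHermitian) (hproj : Pr * Pr = Pr)
    (hrank : Pr.rank = dL)
    (x : Fin N → (Fin n → ℝ))
    (A : Matrix (Fin n) (Fin n) ℝ) :
    let PL : ℝ := sInf {c : ℝ | ∃ u : Fin n → ℝ, Pr.mulVec u = u ∧ (∑ i, (u i) ^ 2) = 1 ∧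
      c = ∑ k, |∑ i, u i * x k i|}
    let frob : ℝ := Real.sqrt (∑ i, ∑ j, ((A * Pr) i j) ^ 2)
    PL * frob ≤ (∑ k, Real.sqrt (∑ i, ((A * Pr).mulVec (x k) i) ^ 2)) ∧
      (PL / Real.sqrt dL) * nucNorm n (A * Pr) ≤ PL * frob := by
  intro PL frob
  set M := A * Pr with hM
  set hH := Matrix.isHermitian_conjTranspose_mul_self M with hHdef
  set v := hH.eigenvectorBasis with hv
  set μ := hH.eigenvalues with hμ
  have hμ0 : ∀ i, 0 ≤ μ i := fun i =>
    (Matrix.posSemidef_conjTranspose_mul_self M).eigenvalues_nonneg i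
  set S : ℝ := ∑ i, ∑ j, (M i j)^2 with hSdef
  have hS0 : 0 ≤ S := by positivity
  have hfrob : frob = Real.sqrt S := rfl
  have htrace : ∑ i, μ i = S := by
    rw [← trace_eq_sum_eig_s16 hH]
    simp only [Matrix.trace, Matrix.diag_apply, Matrix.mul_apply, Matrix.conjTranspose_apply,
      star_trivial]
    rw [Finset.sum_comm]
    congr 1; ext i; congr 1; ext j; ring
  -- PL basics
  have hsetnn : ∀ c ∈ {c : ℝ | ∃ u : Fin n → ℝ, Pr.mulVec u = u ∧ (∑ i, (u i) ^ 2) = 1 ∧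
      c = ∑ k, |∑ i, u i * x k i|}, 0 ≤ c := by
    rintro c ⟨u, -, -, rfl⟩; positivity
  have hPL0 : 0 ≤ PL := Real.sInf_nonneg hsetnn
  have hbdd : BddBelow {c : ℝ | ∃ u : Fin n → ℝ, Pr.mulVec u = u ∧ (∑ i, (u i) ^ 2) = 1 ∧
      c = ∑ k, |∑ i, u i * x k i|} := ⟨0, fun c hc => hsetnn c hc⟩
  -- eigenvectors with nonzero eigenvalue are unit vectors in L
  have hPrH : Pr * (Mᴴ * M) = Mᴴ * M := by
    have h1 : Pr * Mᴴ = Mᴴ := by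
      have hMH : Mᴴ = Pr * Aᴴ := by
        rw [hM, Matrix.conjTranspose_mul, hPr.eq]
      rw [hMH, ← mul_assoc, hproj]
    rw [← mul_assoc, h1]
  have hmem : ∀ i, μ i ≠ 0 → PL ≤ ∑ k, |∑ j, v i j * x k j| := by
    intro i hi
    refine csInf_le hbdd ⟨⇑(v i), ?_, ?_, rfl⟩
    · have hev := hH.mulVec_eigenvectorBasis i
      have h : μ i • (Pr *ᵥ ⇑(v i)) = μ i • ⇑(v i) := by
        rw [← Matrix.mulVec_smul, ← hev, Matrix.mulVec_mulVec, hPrH, hev]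
      exact smul_right_injective (Fin n → ℝ) hi h
    · have hnorm := hH.eigenvectorBasis.orthonormal.1 i
      have h := real_inner_self_eq_norm_sq (v i)
      rw [hnorm] at h
      simp only [PiLp.inner_apply, RCLike.inner_apply', starRingEnd_apply, star_trivial,
        PiLp.toLp_apply, one_pow] at h
      calc ∑ j, (v i j)^2 = ∑ j, v i j * v i j := by simp [pow_two]
        _ = 1 := h
  -- per-k Cauchy-Schwarz
  have hkey : ∀ y : Fin n → ℝ, ∑ i, ((M *ᵥ y) i)^2 = ∑ i, μ i * (∑ j, v i j * y j)^2 :=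
    norm_mulVec_sq M
  have perk : ∀ k, ∑ i, μ i * |∑ j, v i j * x k j| ≤
      Real.sqrt S * Real.sqrt (∑ i, ((M *ᵥ x k) i)^2) := by
    intro k
    have h := Real.sum_mul_le_sqrt_mul_sqrt (Finset.univ : Finset (Fin n))
      (fun i => Real.sqrt (μ i)) (fun i => Real.sqrt (μ i) * |∑ j, v i j * x k j|)
    have e1 : ∑ i, Real.sqrt (μ i) * (Real.sqrt (μ i) * |∑ j, v i j * x k j|)
        = ∑ i, μ i * |∑ j, v i j * x k j| := by
      congr 1; ext i
      rw [← mul_assoc, Real.mul_self_sqrt (hμ0 i)]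
    have e2 : ∑ i, (Real.sqrt (μ i))^2 = S := by
      rw [← htrace]; congr 1; ext i; exact Real.sq_sqrt (hμ0 i)
    have e3 : ∑ i, (Real.sqrt (μ i) * |∑ j, v i j * x k j|)^2 = ∑ i, ((M *ᵥ x k) i)^2 := by
      rw [hkey (x k)]
      congr 1; ext i
      rw [mul_pow, Real.sq_sqrt (hμ0 i), sq_abs]
    rw [e1, e2, e3] at h
    exact h
  constructor
  · -- first inequality
    by_cases hc : S = 0
    · rw [hfrob, hc, Real.sqrt_zero, mul_zero]
      exact Finset.sum_nonneg fun k _ => Real.sqrt_nonneg _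
    · have hSpos : 0 < S := lt_of_le_of_ne hS0 (Ne.symm hc)
      have hfpos : 0 < Real.sqrt S := Real.sqrt_pos.2 hSpos
      have main : PL * S ≤ Real.sqrt S * ∑ k, Real.sqrt (∑ i, ((M *ᵥ x k) i)^2) := by
        calc PL * S = ∑ i, μ i * PL := by
              rw [← htrace, Finset.mul_sum]
              congr 1; ext i; ring
          _ ≤ ∑ i, μ i * (∑ k, |∑ j, v i j * x k j|) := by
              apply Finset.sum_le_sum
              intro i _
              rcases eq_or_ne (μ i) 0 with h0 | h0
              · simp [h0]
              · exact mul_le_mul_of_nonneg_left (hmem i h0) (hμ0 i)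
          _ = ∑ k, ∑ i, μ i * |∑ j, v i j * x k j| := by
              rw [Finset.sum_comm]
              congr 1; ext i; rw [Finset.mul_sum]
          _ ≤ ∑ k, Real.sqrt S * Real.sqrt (∑ i, ((M *ᵥ x k) i)^2) :=
              Finset.sum_le_sum fun k _ => perk k
          _ = Real.sqrt S * ∑ k, Real.sqrt (∑ i, ((M *ᵥ x k) i)^2) := by
              rw [Finset.mul_sum]
      have hSS : Real.sqrt S * Real.sqrt S = S := Real.mul_self_sqrt hS0
      rw [hfrob]
      have heq : Real.sqrt S * (PL * Real.sqrt S) = PL * S := by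
        calc Real.sqrt S * (PL * Real.sqrt S) = PL * (Real.sqrt S * Real.sqrt S) := by ring
          _ = PL * S := by rw [hSS]
      refine le_of_mul_le_mul_left ?_ hfpos
      rw [heq]
      exact main
  · -- second inequality
    set hN' := Matrix.isHermitian_mul_conjTranspose_self M with hN'def
    set ν := hN'.eigenvalues with hν
    have hν0 : ∀ i, 0 ≤ ν i := fun i =>
      (Matrix.posSemidef_self_mul_conjTranspose M).eigenvalues_nonneg i
    have htrace2 : ∑ i, ν i = S := by
      rw [← trace_eq_sum_eig_s16 hN']
      simp only [Matrix.trace, Matrix.diag_apply, Matrix.mul_apply, Matrix.conjTranspose_apply,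
        star_trivial]
      congr 1; ext i; congr 1; ext j; ring
    have hcard : (Fintype.card {i // ν i ≠ 0} : ℝ) ≤ (dL : ℝ) := by
      have h1 : Fintype.card {i // ν i ≠ 0} = (M * Mᴴ).rank := (hN'.rank_eq_card_non_zero_eigs).symm
      have h2 : (M * Mᴴ).rank ≤ M.rank := Matrix.rank_mul_le_left M Mᴴ
      have h3 : M.rank ≤ Pr.rank := Matrix.rank_mul_le_right A Pr
      have : Fintype.card {i // ν i ≠ 0} ≤ dL := by
        rw [h1, ← hrank]; exact le_trans h2 h3
      exact_mod_cast this
    have hnuc : nucNorm n M ≤ Real.sqrt dL * frob := by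
      have h := Real.sum_mul_le_sqrt_mul_sqrt (Finset.univ : Finset (Fin n))
        (fun i => if ν i ≠ 0 then (1:ℝ) else 0) (fun i => Real.sqrt (ν i))
      have hnucdef : nucNorm n M = ∑ i, Real.sqrt (ν i) := rfl
      have e1 : ∑ i, (if ν i ≠ 0 then (1:ℝ) else 0) * Real.sqrt (ν i) = nucNorm n M := by
        rw [hnucdef]
        congr 1; ext i
        rcases eq_or_ne (ν i) 0 with h0 | h0
        · simp [h0]
        · simp [h0]
      have e2 : ∑ i, (if ν i ≠ 0 then (1:ℝ) else 0)^2 = Fintype.card {i // ν i ≠ 0} := by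
        rw [Fintype.card_subtype]
        rw [Finset.card_eq_sum_ones]
        push_cast
        rw [Finset.sum_filter]
        congr 1; ext i
        rcases eq_or_ne (ν i) 0 with h0 | h0 <;> simp [h0]
      have e3 : ∑ i, (Real.sqrt (ν i))^2 = S := by
        rw [← htrace2]; congr 1; ext i; exact Real.sq_sqrt (hν0 i)
      rw [e1, e2, e3] at h
      calc nucNorm n M ≤ Real.sqrt (Fintype.card {i // ν i ≠ 0}) * Real.sqrt S := h
        _ ≤ Real.sqrt dL * Real.sqrt S := by
            apply mul_le_mul_of_nonneg_right _ (Real.sqrt_nonneg _)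
            exact Real.sqrt_le_sqrt hcard
        _ = Real.sqrt dL * frob := by rw [hfrob]
    have hdLpos : (0:ℝ) < Real.sqrt dL := Real.sqrt_pos.2 (by exact_mod_cast hdL)
    calc PL / Real.sqrt dL * nucNorm n M
        ≤ PL / Real.sqrt dL * (Real.sqrt dL * frob) :=
          mul_le_mul_of_nonneg_left hnuc (div_nonneg hPL0 hdLpos.le)
      _ = PL * frob := by
          rw [← mul_assoc, div_mul_cancel₀ _ (ne_of_gt hdLpos)]
end

section
/- Let P be symmetric with eigenvalue decomposition P = U diag(λ_P) U^T (eigenvalues in descending order), let O_d be the set of symmetric matrices with eigenvalues in {0,1} and trace at most d. For every Schatten p-norm (1 ≤ p ≤ ∞), a nearest point of O_d to P is Π = U diag(λ̂) U^T, where λ̂_k = 1 if k ≤ d and λ_{P,k} ≥ 1/2, and λ̂_k = 0 otherwise. -/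
open Matrix Polynomial Finset

namespace S17
variable {n : ℕ}

def mset (f : Fin n → ℝ) : Multiset ℝ := Multiset.map f Finset.univ.val

lemma mset_comp_perm (f : Fin n → ℝ) (e : Equiv.Perm (Fin n)) :
    mset (f ∘ e) = mset f := by
  unfold mset
  have h : (Finset.univ.val : Multiset (Fin n)) = Multiset.map e Finset.univ.val := by
    have := Finset.map_univ_equiv e
    rw [← this]
    simp [Finset.map_val]
  conv_rhs => rw [h]
  rw [Multiset.map_map]

noncomputable def dperm (f : Fin n → ℝ) : Equiv.Perm (Fin n) := Tuple.sort (fun i => -f i)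

noncomputable def dsort (f : Fin n → ℝ) : Fin n → ℝ := f ∘ dperm f

lemma antitone_dsort (f : Fin n → ℝ) : Antitone (dsort f) := by
  have h := Tuple.monotone_sort (fun i => -f i)
  intro i j hij
  have := h hij
  simp only [Function.comp_apply] at this
  unfold dsort dperm
  simp only [Function.comp_apply]
  linarith

lemma mset_dsort (f : Fin n → ℝ) : mset (dsort f) = mset f := mset_comp_perm f _

lemma monotone_unique {f g : Fin n → ℝ} (hf : Monotone f) (hg : Monotone g)
    (h : mset f = mset g) : f = g := by
  have hof : (Finset.univ.val.map f) = (Finset.univ.val.map g) := h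
  have h1 : (List.ofFn f : Multiset ℝ) = (List.ofFn g : Multiset ℝ) := by
    have hu : (Finset.univ.val : Multiset (Fin n)) = ↑(List.finRange n) := rfl
    rw [hu] at hof
    simpa [← List.ofFn_eq_map] using hof
  have hperm : (List.ofFn f).Perm (List.ofFn g) := Quotient.exact h1
  exact List.ofFn_injective (List.Perm.eq_of_sortedLE
    (List.sortedLE_ofFn_iff.2 hf) (List.sortedLE_ofFn_iff.2 hg) hperm)

lemma antitone_unique {f g : Fin n → ℝ} (hf : Antitone f) (hg : Antitone g)
    (h : mset f = mset g) : f = g := by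
  have hrev : ∀ h' : Fin n → ℝ, Antitone h' → Monotone (h' ∘ Fin.revPerm) := by
    intro h' hh i j hij
    exact hh (by simpa using Fin.rev_le_rev.mpr hij)
  have := monotone_unique (hrev f hf) (hrev g hg)
    (by rw [mset_comp_perm, mset_comp_perm]; exact h)
  funext i
  have := congrFun this (Fin.revPerm i)
  simpa using this

/-- uniqueness: any antitone tuple with the same multiset as f equals dsort f -/
lemma eq_dsort {f g : Fin n → ℝ} (hg : Antitone g) (h : mset g = mset f) : g = dsort f :=
  antitone_unique hg (antitone_dsort f) (h.trans (mset_dsort f).symm)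


lemma ctr (M : Matrix (Fin n) (Fin n) ℝ) : Mᴴ = Mᵀ := by
  ext i j; simp [conjTranspose_apply]

lemma charpoly_conj {V W M : Matrix (Fin n) (Fin n) ℝ} (h : V * W = 1) :
    charpoly (V * M * W) = charpoly M := by
  have hone : (V.map (C : ℝ → ℝ[X])) * (W.map C) = 1 := by
    rw [← Matrix.map_mul, h]
    exact Matrix.map_one _ (map_zero C) (map_one C)
  have hscal : (V.map (C : ℝ → ℝ[X])) * Matrix.diagonal (fun _ => (X : ℝ[X])) * (W.map C)
      = Matrix.diagonal (fun _ => (X : ℝ[X])) := by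
    have hcomm : (V.map (C : ℝ → ℝ[X])) * Matrix.diagonal (fun _ => (X : ℝ[X]))
        = Matrix.diagonal (fun _ => (X : ℝ[X])) * (V.map C) := by
      ext i j
      rw [Matrix.mul_diagonal, Matrix.diagonal_mul, mul_comm]
    rw [hcomm, mul_assoc, hone, mul_one]
  have key : charmatrix (V * M * W) =
      (V.map (C : ℝ → ℝ[X])) * charmatrix M * (W.map C) := by
    have h1 : charmatrix (V * M * W)
        = Matrix.diagonal (fun _ => (X : ℝ[X])) - (V * M * W).map C := by
      unfold charmatrix
      rw [Matrix.scalar_apply]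
      rfl
    have h2 : charmatrix M = Matrix.diagonal (fun _ => (X : ℝ[X])) - M.map C := by
      unfold charmatrix
      rw [Matrix.scalar_apply]
      rfl
    rw [h1, h2, mul_sub, sub_mul, hscal, Matrix.map_mul, Matrix.map_mul]
  unfold charpoly
  rw [key, det_mul, det_mul]
  have h2 : (V.map (C : ℝ → ℝ[X])).det * (W.map C).det = 1 := by
    rw [← det_mul, hone, det_one]
  calc (V.map (C : ℝ → ℝ[X])).det * (charmatrix M).det * (W.map C).det
      = (V.map (C : ℝ → ℝ[X])).det * (W.map C).det * (charmatrix M).det := by ring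
    _ = (charmatrix M).det := by rw [h2, one_mul]

lemma charpoly_diagonal (g : Fin n → ℝ) :
    charpoly (diagonal g) = ∏ i, (X - C (g i)) := by
  have : charmatrix (diagonal g) = diagonal (fun i => (X : ℝ[X]) - C (g i)) := by
    ext i j
    by_cases h : i = j
    · subst h; simp
    · rw [charmatrix_apply_ne _ _ _ h, diagonal_apply_ne _ h, diagonal_apply_ne _ h, map_zero,
        neg_zero]
  rw [charpoly, this, det_diagonal]

lemma prod_X_sub_C_inj {f g : Fin n → ℝ}
    (h : ∏ i, (X - C (f i)) = ∏ i, (X - C (g i))) : mset f = mset g := by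
  have key : ∀ h' : Fin n → ℝ,
      ∏ i, (X - C (h' i)) = ((mset h').map fun a => X - C a).prod := by
    intro h'
    rw [Finset.prod_eq_multiset_prod]
    unfold mset
    rw [Multiset.map_map]
    rfl
  have h' : ((mset f).map fun a => X - C a).prod = ((mset g).map fun a => X - C a).prod := by
    rw [← key f, ← key g]; exact h
  have h2 := congrArg Polynomial.roots h'
  rwa [roots_multiset_prod_X_sub_C, roots_multiset_prod_X_sub_C] at h2

/-- central lemma: eigenvalue multiset of V diag(g) Vᵀ equals the multiset of g -/
lemma mset_eigenvalues {M V : Matrix (Fin n) (Fin n) ℝ} {g : Fin n → ℝ}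
    (hM : M.IsHermitian) (hV : V * Vᵀ = 1) (hMVg : M = V * diagonal g * Vᵀ) :
    mset hM.eigenvalues = mset g := by
  apply prod_X_sub_C_inj
  rw [← charpoly_diagonal, ← charpoly_diagonal]
  have h1 : charpoly M = charpoly (diagonal hM.eigenvalues) := by
    have hW : (hM.eigenvectorUnitary : Matrix (Fin n) (Fin n) ℝ) *
        star (hM.eigenvectorUnitary : Matrix (Fin n) (Fin n) ℝ) = 1 :=
      (Matrix.mem_unitaryGroup_iff).mp hM.eigenvectorUnitary.2
    have hMe : M = (hM.eigenvectorUnitary : Matrix (Fin n) (Fin n) ℝ) *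
        diagonal hM.eigenvalues *
        star (hM.eigenvectorUnitary : Matrix (Fin n) (Fin n) ℝ) := by
      have h0 : (RCLike.ofReal ∘ hM.eigenvalues : Fin n → ℝ) = hM.eigenvalues := by
        funext i; simp
      have := hM.spectral_theorem
      rwa [h0] at this
    calc M.charpoly = ((hM.eigenvectorUnitary : Matrix (Fin n) (Fin n) ℝ) *
        diagonal hM.eigenvalues *
        star (hM.eigenvectorUnitary : Matrix (Fin n) (Fin n) ℝ)).charpoly := by rw [← hMe]
      _ = _ := charpoly_conj hW
  have h2 : charpoly M = charpoly (diagonal g) := by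
    calc M.charpoly = (V * diagonal g * Vᵀ).charpoly := by rw [← hMVg]
      _ = _ := charpoly_conj hV
  rw [← h1, h2]

lemma trace_eq_sum {M : Matrix (Fin n) (Fin n) ℝ} {V : Matrix (Fin n) (Fin n) ℝ}
    {g : Fin n → ℝ} (hV : V * Vᵀ = 1) (hMVg : M = V * diagonal g * Vᵀ) :
    M.trace = ∑ i, g i := by
  rw [hMVg, Matrix.trace_mul_cycle, mul_eq_one_comm.mp hV, one_mul, trace_diagonal]

section Spectral
variable {A : Matrix (Fin n) (Fin n) ℝ} (hA : A.IsHermitian)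

lemma eU_mul_transpose :
    (hA.eigenvectorUnitary : Matrix (Fin n) (Fin n) ℝ) *
      (hA.eigenvectorUnitary : Matrix (Fin n) (Fin n) ℝ)ᵀ = 1 := by
  rw [← ctr]
  exact (Matrix.mem_unitaryGroup_iff).mp hA.eigenvectorUnitary.2

lemma spectral_real :
    A = (hA.eigenvectorUnitary : Matrix (Fin n) (Fin n) ℝ) * diagonal hA.eigenvalues *
      (hA.eigenvectorUnitary : Matrix (Fin n) (Fin n) ℝ)ᵀ := by
  have h0 : (RCLike.ofReal ∘ hA.eigenvalues : Fin n → ℝ) = hA.eigenvalues := by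
    funext i; simp
  have := hA.spectral_theorem
  rw [h0, Unitary.conjStarAlgAut_apply, Matrix.star_eq_conjTranspose, ctr] at this
  exact this

lemma quad_eq (x : Fin n → ℝ) :
    x ⬝ᵥ (A *ᵥ x) = ∑ j, hA.eigenvalues j *
      (((hA.eigenvectorUnitary : Matrix (Fin n) (Fin n) ℝ)ᵀ *ᵥ x) j) ^ 2 := by
  set W := (hA.eigenvectorUnitary : Matrix (Fin n) (Fin n) ℝ) with hWdef
  have h1 : A *ᵥ x = W *ᵥ (diagonal hA.eigenvalues *ᵥ (Wᵀ *ᵥ x)) := by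
    conv_lhs => rw [spectral_real hA]
    rw [← mulVec_mulVec, ← mulVec_mulVec]
  rw [h1, dotProduct_mulVec, ← mulVec_transpose]
  simp [dotProduct, mulVec_diagonal, sq]
  apply Finset.sum_congr rfl
  intro j _
  ring

lemma parseval (x : Fin n → ℝ) :
    x ⬝ᵥ x = ∑ j, (((hA.eigenvectorUnitary : Matrix (Fin n) (Fin n) ℝ)ᵀ *ᵥ x) j) ^ 2 := by
  set W := (hA.eigenvectorUnitary : Matrix (Fin n) (Fin n) ℝ) with hWdef
  have h1 : x ⬝ᵥ x = x ⬝ᵥ ((W * Wᵀ) *ᵥ x) := by rw [eU_mul_transpose hA, one_mulVec]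
  rw [h1, ← mulVec_mulVec, dotProduct_mulVec, ← mulVec_transpose]
  simp [dotProduct, sq]

end Spectral

lemma dot_self_pos {x : Fin n → ℝ} (hx : x ≠ 0) : 0 < x ⬝ᵥ x := by
  obtain ⟨i, hi⟩ := Function.ne_iff.mp hx
  have : (0:ℝ) < x i * x i := by
    rcases lt_or_gt_of_ne (show x i ≠ 0 from hi) with h | h <;> nlinarith
  unfold dotProduct
  apply Finset.sum_pos' (fun j _ => mul_self_nonneg _) ⟨i, Finset.mem_univ i, this⟩

/-- Weyl monotonicity: if B - A is PSD then the sorted eigenvalues dominate. -/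
lemma dev_mono {A B : Matrix (Fin n) (Fin n) ℝ} (hA : A.IsHermitian) (hB : B.IsHermitian)
    (hAB : (B - A).PosSemidef) (i : Fin n) :
    dsort hA.eigenvalues i ≤ dsort hB.eigenvalues i := by
  classical
  set WA := (hA.eigenvectorUnitary : Matrix (Fin n) (Fin n) ℝ) with hWA
  set WB := (hB.eigenvectorUnitary : Matrix (Fin n) (Fin n) ℝ) with hWB
  set sA := dperm hA.eigenvalues with hsA
  set sB := dperm hB.eigenvalues with hsB
  -- the constraint map
  set L : (Fin n → ℝ) →ₗ[ℝ] ({j : Fin n // j ≠ i} → ℝ) := LinearMap.pi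
    (fun j : {j : Fin n // j ≠ i} =>
      if (j : Fin n) < i then (LinearMap.proj (sB (j : Fin n))).comp (Matrix.mulVecLin WBᵀ)
      else (LinearMap.proj (sA (j : Fin n))).comp (Matrix.mulVecLin WAᵀ)) with hL
  have hcard : Module.finrank ℝ ({j : Fin n // j ≠ i} → ℝ) < Module.finrank ℝ (Fin n → ℝ) := by
    simp only [Module.finrank_fintype_fun_eq_card, Fintype.card_fin]
    have h1 : Fintype.card {j : Fin n // j ≠ i} = n - 1 := by
      rw [Fintype.card_subtype_compl, Fintype.card_subtype_eq, Fintype.card_fin]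
    rw [h1]
    have : 0 < n := i.pos
    omega
  have hnotinj : ¬ Function.Injective L := by
    intro hinj
    exact absurd (LinearMap.finrank_le_finrank_of_injective hinj) (not_le.mpr hcard)
  have hker : LinearMap.ker L ≠ ⊥ := fun h => hnotinj (LinearMap.ker_eq_bot.mp h)
  obtain ⟨x, hxker, hx0⟩ := (LinearMap.ker L).ne_bot_iff.mp hker
  have hLx : ∀ j : Fin n, j ≠ i →
      (¬ (j < i) → (WAᵀ *ᵥ x) (sA j) = 0) ∧ ((j < i) → (WBᵀ *ᵥ x) (sB j) = 0) := by
    intro j hj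
    have := congrFun (LinearMap.mem_ker.mp hxker) ⟨j, hj⟩
    by_cases hlt : j < i
    · refine ⟨fun h => absurd hlt h, fun _ => ?_⟩
      simpa [hL, LinearMap.pi_apply, hlt, mulVec_transpose] using this
    · refine ⟨fun _ => ?_, fun h => absurd h hlt⟩
      simpa [hL, LinearMap.pi_apply, hlt, mulVec_transpose] using this
  set a : Fin n → ℝ := fun j => (WAᵀ *ᵥ x) (sA j) with ha
  set b : Fin n → ℝ := fun j => (WBᵀ *ᵥ x) (sB j) with hb
  have hA_lower : dsort hA.eigenvalues i * (x ⬝ᵥ x) ≤ x ⬝ᵥ (A *ᵥ x) := by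
    rw [quad_eq hA x, parseval hA x, ← Equiv.sum_comp sA
      (fun k => hA.eigenvalues k * ((WAᵀ *ᵥ x) k) ^ 2), ← Equiv.sum_comp sA
      (fun k => ((WAᵀ *ᵥ x) k) ^ 2), Finset.mul_sum]
    apply Finset.sum_le_sum
    intro j _
    by_cases hji : j ≤ i
    · have : dsort hA.eigenvalues i ≤ dsort hA.eigenvalues j := antitone_dsort _ hji
      exact mul_le_mul_of_nonneg_right this (sq_nonneg _)
    · have hj : (WAᵀ *ᵥ x) (sA j) = 0 := by
        have hne : j ≠ i := fun h => hji (le_of_eq h)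
        exact (hLx j hne).1 (fun h => hji (le_of_lt h))
      simp [hj]
  have hB_upper : x ⬝ᵥ (B *ᵥ x) ≤ dsort hB.eigenvalues i * (x ⬝ᵥ x) := by
    rw [quad_eq hB x, parseval hB x, ← Equiv.sum_comp sB
      (fun k => hB.eigenvalues k * ((WBᵀ *ᵥ x) k) ^ 2), ← Equiv.sum_comp sB
      (fun k => ((WBᵀ *ᵥ x) k) ^ 2), Finset.mul_sum]
    apply Finset.sum_le_sum
    intro j _
    by_cases hji : i ≤ j
    · have : dsort hB.eigenvalues j ≤ dsort hB.eigenvalues i := antitone_dsort _ hji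
      exact mul_le_mul_of_nonneg_right this (sq_nonneg _)
    · have hj : (WBᵀ *ᵥ x) (sB j) = 0 := by
        have hne : j ≠ i := fun h => hji (ge_of_eq h)
        exact (hLx j hne).2 (lt_of_not_ge hji)
      simp [hj]
  have hq : x ⬝ᵥ (A *ᵥ x) ≤ x ⬝ᵥ (B *ᵥ x) := by
    have h0 := hAB.dotProduct_mulVec_nonneg x
    have hstar : star x = x := by funext k; simp
    rw [hstar, sub_mulVec, dotProduct_sub] at h0
    linarith
  have hpos := dot_self_pos hx0
  have := le_trans (le_trans hA_lower hq) hB_upper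
  exact le_of_mul_le_mul_right (by linarith [this]) hpos

/-- ℕ-indexed descending sort, 0 beyond n -/
noncomputable def nsort (f : Fin n → ℝ) : ℕ → ℝ :=
  fun k => if h : k < n then dsort f ⟨k, h⟩ else 0

lemma nsort_anti (f : Fin n → ℝ) {i j : ℕ} (hij : i ≤ j) (hj : j < n) :
    nsort f j ≤ nsort f i := by
  have hi : i < n := lt_of_le_of_lt hij hj
  unfold nsort
  rw [dif_pos hj, dif_pos hi]
  exact antitone_dsort f (show (⟨i, hi⟩ : Fin n) ≤ ⟨j, hj⟩ from hij)

lemma sum_mset_eq {f g : Fin n → ℝ} (h : mset f = mset g) : ∑ i, f i = ∑ i, g i := by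
  have : (mset f).sum = (mset g).sum := by rw [h]
  exact this

lemma sum_dsort (f : Fin n → ℝ) : ∑ i, dsort f i = ∑ i, f i :=
  Equiv.sum_comp (dperm f) f

lemma sum_range_nsort (f : Fin n → ℝ) : ∑ i ∈ Finset.range n, nsort f i = ∑ i, f i := by
  rw [← sum_dsort f, ← Fin.sum_univ_eq_sum_range (fun k => nsort f k) n]
  apply Finset.sum_congr rfl
  intro i _
  unfold nsort
  rw [dif_pos i.2]

lemma herm_smul_one (τ : ℝ) : ((τ • 1 : Matrix (Fin n) (Fin n) ℝ)).IsHermitian := by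
  unfold Matrix.IsHermitian
  rw [conjTranspose_smul, conjTranspose_one]
  simp

lemma diagonal_const (τ : ℝ) :
    diagonal (fun _ : Fin n => τ) = (τ • 1 : Matrix (Fin n) (Fin n) ℝ) := by
  ext i j
  by_cases h : i = j
  · subst h; simp
  · simp [diagonal_apply_ne _ h, Matrix.one_apply_ne h]

lemma dsort_shift (f : Fin n → ℝ) (τ : ℝ) :
    dsort (fun i => f i + τ) = fun i => dsort f i + τ := by
  symm
  apply eq_dsort
  · intro i j hij
    simp only [add_le_add_iff_right]
    exact antitone_dsort f hij
  · show mset ((fun v => v + τ) ∘ dsort f) = mset ((fun v => v + τ) ∘ f)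
    unfold mset
    rw [← Multiset.map_map, ← Multiset.map_map]
    congr 1
    exact mset_dsort f

lemma dev_shift {M : Matrix (Fin n) (Fin n) ℝ} (hM : M.IsHermitian) (τ : ℝ)
    (hM' : (M + τ • 1).IsHermitian) :
    dsort hM'.eigenvalues = fun i => dsort hM.eigenvalues i + τ := by
  set W := (hM.eigenvectorUnitary : Matrix (Fin n) (Fin n) ℝ) with hW
  have hWo : W * Wᵀ = 1 := eU_mul_transpose hM
  have hspec : M + τ • 1 = W * diagonal (fun i => hM.eigenvalues i + τ) * Wᵀ := by
    have : diagonal (fun i => hM.eigenvalues i + τ)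
        = diagonal hM.eigenvalues + diagonal (fun _ : Fin n => τ) := by
      rw [← diagonal_add]
    rw [this, mul_add, add_mul, ← spectral_real hM, diagonal_const, mul_smul_comm,
      smul_mul_assoc, mul_one, hWo]
  have hm1 : mset hM'.eigenvalues = mset (fun i => hM.eigenvalues i + τ) :=
    mset_eigenvalues hM' hWo hspec
  have h2 : dsort hM'.eigenvalues = dsort (fun i => hM.eigenvalues i + τ) := by
    apply antitone_unique (antitone_dsort _) (antitone_dsort _)
    rw [mset_dsort, mset_dsort, hm1]
  rw [h2, dsort_shift]

lemma trace_eq_sum_ev {M : Matrix (Fin n) (Fin n) ℝ} (hM : M.IsHermitian) :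
    M.trace = ∑ i, hM.eigenvalues i :=
  trace_eq_sum (eU_mul_transpose hM) (spectral_real hM)

/-- Lidskii-type inequality -/
lemma lidskii {A B : Matrix (Fin n) (Fin n) ℝ} (hA : A.IsHermitian) (hB : B.IsHermitian)
    (hC : (A - B).IsHermitian) (S : Finset (Fin n)) :
    ∑ i ∈ S, (dsort hA.eigenvalues i - dsort hB.eigenvalues i)
      ≤ ∑ i ∈ Finset.range S.card, nsort hC.eigenvalues i := by
  classical
  set ν := hC.eigenvalues with hν
  set k := S.card with hk
  have hkn : k ≤ n := by
    have := Finset.card_le_card (Finset.subset_univ S)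
    simpa using this
  rcases Nat.eq_zero_or_pos k with hk0 | hkpos
  · rw [hk0]
    have : S = ∅ := Finset.card_eq_zero.mp hk0
    simp [this]
  have hk1n : k - 1 < n := by omega
  set τ := nsort ν (k - 1) with hτ
  set V := (hC.eigenvectorUnitary : Matrix (Fin n) (Fin n) ℝ) with hV
  have hVo : V * Vᵀ = 1 := eU_mul_transpose hC
  set Cp := V * diagonal (fun i => max (ν i - τ) 0) * Vᵀ with hCp
  have hCpPSD : Cp.PosSemidef := by
    have hd : Matrix.PosSemidef (diagonal (fun i => max (ν i - τ) 0)) :=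
      Matrix.PosSemidef.diagonal (fun i => le_max_right _ _)
    have := hd.mul_mul_conjTranspose_same V
    rwa [ctr] at this
  set M1 := B + Cp with hM1def
  have hM1 : M1.IsHermitian := hB.add hCpPSD.1
  have hM2 : (M1 + τ • 1).IsHermitian := hM1.add (herm_smul_one τ)
  have psd1 : (M1 - B).PosSemidef := by
    rw [hM1def, add_sub_cancel_left]
    exact hCpPSD
  have psd2 : ((M1 + τ • 1) - A).PosSemidef := by
    have hAeq : A = B + (A - B) := by abel
    have hCeq : A - B = V * diagonal ν * Vᵀ := spectral_real hC
    have htau : (τ • 1 : Matrix (Fin n) (Fin n) ℝ) = V * diagonal (fun _ => τ) * Vᵀ := by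
      rw [diagonal_const, mul_smul_comm, smul_mul_assoc, mul_one, hVo]
    have key : (M1 + τ • 1) - A = V * diagonal (fun i => max (τ - ν i) 0) * Vᵀ := by
      rw [hM1def]
      have expand : B + Cp + τ • 1 - A = Cp + τ • 1 - (A - B) := by abel
      rw [expand, hCp, hCeq, htau]
      have hdist : ∀ D1 D2 D3 : Matrix (Fin n) (Fin n) ℝ,
          V * D1 * Vᵀ + V * D2 * Vᵀ - V * D3 * Vᵀ = V * (D1 + D2 - D3) * Vᵀ := by
        intros; noncomm_ring
      rw [hdist]
      have hdiag : diagonal (fun i => max (ν i - τ) 0) + diagonal (fun _ : Fin n => τ)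
          - diagonal ν = diagonal (fun i => max (τ - ν i) 0) := by
        ext i j
        by_cases hij : i = j
        · subst hij
          simp only [Matrix.add_apply, Matrix.sub_apply, diagonal_apply_eq]
          rcases le_total (ν i) τ with h | h
          · rw [max_eq_right (by linarith : ν i - τ ≤ (0:ℝ)),
              max_eq_left (by linarith : (0:ℝ) ≤ τ - ν i)]; ring
          · rw [max_eq_left (by linarith : (0:ℝ) ≤ ν i - τ),
              max_eq_right (by linarith : τ - ν i ≤ (0:ℝ))]; ring
        · simp [Matrix.add_apply, Matrix.sub_apply, diagonal_apply_ne _ hij]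
      rw [hdiag]
    rw [key]
    have hd : Matrix.PosSemidef (diagonal (fun i => max (τ - ν i) 0)) :=
      Matrix.PosSemidef.diagonal (fun i => le_max_right _ _)
    have := hd.mul_mul_conjTranspose_same V
    rwa [ctr] at this
  have hup : ∀ i, dsort hA.eigenvalues i ≤ dsort hM1.eigenvalues i + τ := by
    intro i
    have h1 := dev_mono hA hM2 psd2 i
    have h2 := dev_shift hM1 τ hM2
    rw [h2] at h1
    exact h1
  have hlo : ∀ i, dsort hB.eigenvalues i ≤ dsort hM1.eigenvalues i :=
    dev_mono hB hM1 psd1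
  -- sum of gaps
  have hgap : ∑ i ∈ S, (dsort hM1.eigenvalues i - dsort hB.eigenvalues i)
      ≤ ∑ i, (dsort hM1.eigenvalues i - dsort hB.eigenvalues i) :=
    Finset.sum_le_sum_of_subset_of_nonneg (Finset.subset_univ S)
      (fun i _ _ => by linarith [hlo i])
  have htrace : ∑ i, (dsort hM1.eigenvalues i - dsort hB.eigenvalues i)
      = ∑ i, max (ν i - τ) 0 := by
    rw [Finset.sum_sub_distrib]
    have e1 : ∑ i, dsort hM1.eigenvalues i = M1.trace := by
      rw [sum_dsort, ← trace_eq_sum_ev hM1]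
    have e2 : ∑ i, dsort hB.eigenvalues i = B.trace := by
      rw [sum_dsort, ← trace_eq_sum_ev hB]
    have e3 : Cp.trace = ∑ i, max (ν i - τ) 0 := trace_eq_sum hVo rfl
    rw [e1, e2, hM1def, trace_add, e3]
    ring
  -- counting: ∑ max (ν i - τ) 0 = ∑_{i<k} (nsort ν i - τ)
  have hcount : ∑ i, max (ν i - τ) 0 = (∑ i ∈ Finset.range k, nsort ν i) - k * τ := by
    have e1 : ∑ i, max (ν i - τ) 0 = ∑ i, max (dsort ν i - τ) 0 :=
      (Equiv.sum_comp (dperm ν) (fun j => max (ν j - τ) 0)).symm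
    have e2 : ∑ i, max (dsort ν i - τ) 0 = ∑ i ∈ Finset.range n, max (nsort ν i - τ) 0 := by
      rw [← Fin.sum_univ_eq_sum_range (fun j => max (nsort ν j - τ) 0) n]
      apply Finset.sum_congr rfl
      intro i _
      unfold nsort
      rw [dif_pos i.2]
    have e3 : ∑ i ∈ Finset.range n, max (nsort ν i - τ) 0
        = ∑ i ∈ Finset.range k, max (nsort ν i - τ) 0 := by
      symm
      apply Finset.sum_subset (Finset.range_subset_range.mpr hkn)
      intro i hin hik
      rw [Finset.mem_range] at hin
      rw [Finset.mem_range, not_lt] at hik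
      have : nsort ν i ≤ τ := nsort_anti ν (by omega) hin
      rw [max_eq_right (by linarith)]
    have e4 : ∑ i ∈ Finset.range k, max (nsort ν i - τ) 0
        = ∑ i ∈ Finset.range k, (nsort ν i - τ) := by
      apply Finset.sum_congr rfl
      intro i hi
      rw [Finset.mem_range] at hi
      have : τ ≤ nsort ν i := nsort_anti ν (by omega) hk1n
      rw [max_eq_left (by linarith)]
    rw [e1, e2, e3, e4, Finset.sum_sub_distrib, Finset.sum_const, Finset.card_range,
      nsmul_eq_mul]
  calc ∑ i ∈ S, (dsort hA.eigenvalues i - dsort hB.eigenvalues i)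
      ≤ ∑ i ∈ S, ((dsort hM1.eigenvalues i + τ) - dsort hB.eigenvalues i) :=
        Finset.sum_le_sum (fun i _ => by linarith [hup i])
    _ = ∑ i ∈ S, ((dsort hM1.eigenvalues i - dsort hB.eigenvalues i) + τ) :=
        Finset.sum_congr rfl (fun i _ => by ring)
    _ = (∑ i ∈ S, (dsort hM1.eigenvalues i - dsort hB.eigenvalues i)) + k * τ := by
        rw [Finset.sum_add_distrib, Finset.sum_const, nsmul_eq_mul, ← hk]
    _ ≤ (∑ i, (dsort hM1.eigenvalues i - dsort hB.eigenvalues i)) + k * τ := by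
        linarith [hgap]
    _ = (∑ i ∈ Finset.range k, nsort ν i) := by
        rw [htrace, hcount]
        ring

lemma lidskii_total {A B : Matrix (Fin n) (Fin n) ℝ} (hA : A.IsHermitian) (hB : B.IsHermitian)
    (hC : (A - B).IsHermitian) :
    ∑ i, (dsort hA.eigenvalues i - dsort hB.eigenvalues i) = ∑ i, hC.eigenvalues i := by
  rw [Finset.sum_sub_distrib, sum_dsort, sum_dsort, ← trace_eq_sum_ev hA, ← trace_eq_sum_ev hB,
    ← trace_eq_sum_ev hC, trace_sub]

/-! ### Abel summation / majorization machinery -/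

lemma abel_bound (s D : ℕ → ℝ) (N : ℕ)
    (hs : ∀ m, m + 1 < N → s (m + 1) ≤ s m)
    (hD : ∀ m, m ≤ N → 0 ≤ ∑ i ∈ Finset.range m, D i)
    (hDN : ∑ i ∈ Finset.range N, D i = 0) :
    0 ≤ ∑ i ∈ Finset.range N, s i * D i := by
  have claim : ∀ m, 1 ≤ m → m ≤ N →
      s (m - 1) * (∑ i ∈ Finset.range m, D i) ≤ ∑ i ∈ Finset.range m, s i * D i := by
    intro m
    induction m with
    | zero => omega
    | succ m ih =>
      intro _ hmN
      rcases Nat.eq_zero_or_pos m with rfl | hm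
      · simp
      · have h1 := ih hm (by omega)
        rw [Finset.sum_range_succ, Finset.sum_range_succ (fun i => s i * D i)]
        simp only [Nat.add_sub_cancel]
        have hsm : s m ≤ s (m - 1) := by
          have := hs (m - 1) (by omega)
          rwa [Nat.sub_add_cancel hm] at this
        have hDm := hD m (by omega)
        nlinarith [h1, mul_le_mul_of_nonneg_right hsm hDm]
  rcases Nat.eq_zero_or_pos N with rfl | hN
  · simp
  · have := claim N hN le_rfl
    rw [hDN, mul_zero] at this
    exact this

lemma partial_sum_nsort {x : Fin n → ℝ} {m : ℕ} (hm : m ≤ n) :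
    ∃ S : Finset (Fin n), S.card = m ∧
      ∑ i ∈ S, x i = ∑ i ∈ Finset.range m, nsort x i := by
  refine ⟨Finset.map ⟨fun j : Fin m => dperm x (Fin.castLE hm j),
    fun a b hab => by
      have := (dperm x).injective hab
      exact Fin.castLE_injective hm this⟩ Finset.univ, ?_, ?_⟩
  · rw [Finset.card_map, Finset.card_univ, Fintype.card_fin]
  · rw [Finset.sum_map]
    rw [← Fin.sum_univ_eq_sum_range (fun k => nsort x k) m]
    apply Finset.sum_congr rfl
    intro j _
    unfold nsort
    rw [dif_pos (show (j : ℕ) < n from lt_of_lt_of_le j.2 hm)]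
    rfl

section Maj
variable {x y : Fin n → ℝ}

/-- x is majorized by y (hypothesis form produced by Lidskii) -/
def Maj (x y : Fin n → ℝ) : Prop :=
  (∀ S : Finset (Fin n), ∑ i ∈ S, x i ≤ ∑ i ∈ Finset.range S.card, nsort y i) ∧
    ∑ i, x i = ∑ i, y i

lemma Maj.partial (h : Maj x y) {m : ℕ} (hm : m ≤ n) :
    ∑ i ∈ Finset.range m, nsort x i ≤ ∑ i ∈ Finset.range m, nsort y i := by
  obtain ⟨S, hcard, hsum⟩ := partial_sum_nsort (x := x) hm
  have := h.1 S
  rw [hcard] at this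
  rw [← hsum]
  exact this

lemma Maj.sum_phi (h : Maj x y) {φ s : ℝ → ℝ}
    (hgrad : ∀ a b, φ a + s a * (b - a) ≤ φ b) (hmono : Monotone s) :
    ∑ i, φ (x i) ≤ ∑ i, φ (y i) := by
  set X := nsort x with hX
  set Y := nsort y with hY
  have habel : 0 ≤ ∑ i ∈ Finset.range n, s (X i) * (Y i - X i) := by
    apply abel_bound
    · intro m hm
      exact hmono (nsort_anti x (Nat.le_succ m) hm)
    · intro m hm
      rw [Finset.sum_sub_distrib]
      have := h.partial hm
      linarith
    · rw [Finset.sum_sub_distrib, sum_range_nsort, sum_range_nsort, h.2]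
      ring
  have hsum : ∑ i ∈ Finset.range n, φ (X i) ≤ ∑ i ∈ Finset.range n, φ (Y i) := by
    have hle : ∑ i ∈ Finset.range n, (φ (X i) + s (X i) * (Y i - X i))
        ≤ ∑ i ∈ Finset.range n, φ (Y i) :=
      Finset.sum_le_sum (fun i _ => hgrad (X i) (Y i))
    rw [Finset.sum_add_distrib] at hle
    linarith
  have ex : ∀ z : Fin n → ℝ, ∑ i ∈ Finset.range n, φ (nsort z i) = ∑ i, φ (z i) := by
    intro z
    rw [← Fin.sum_univ_eq_sum_range (fun k => φ (nsort z k)) n]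
    have e1 : ∑ i : Fin n, φ (nsort z i) = ∑ i : Fin n, φ (dsort z i) := by
      apply Finset.sum_congr rfl
      intro i _
      unfold nsort
      rw [dif_pos i.2]
    rw [e1]
    exact Equiv.sum_comp (dperm z) (fun k => φ (z k))
  rw [← ex x, ← ex y]
  exact hsum

lemma Maj.upper (h : Maj x y) (i : Fin n) : x i ≤ nsort y 0 := by
  have := h.1 {i}
  simpa using this

lemma Maj.lower (h : Maj x y) (i : Fin n) : nsort y (n - 1) ≤ x i := by
  have hn : 1 ≤ n := i.pos
  have hS := h.1 (Finset.univ.erase i)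
  rw [Finset.card_erase_of_mem (Finset.mem_univ i), Finset.card_univ, Fintype.card_fin] at hS
  have he : ∑ j ∈ Finset.univ.erase i, x j = (∑ j, x j) - x i := by
    rw [← Finset.add_sum_erase _ x (Finset.mem_univ i)]
    ring
  have hr : ∑ j ∈ Finset.range (n - 1), nsort y j
      = (∑ j, y j) - nsort y (n - 1) := by
    rw [← sum_range_nsort y]
    have h2 : ∑ j ∈ Finset.range ((n - 1) + 1), nsort y j
        = (∑ j ∈ Finset.range (n - 1), nsort y j) + nsort y (n - 1) :=
      Finset.sum_range_succ _ _
    rw [show (n - 1) + 1 = n by omega] at h2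
    linarith
  rw [he, hr, ← h.2] at hS
  linarith

end Maj

/-! ### subgradient of |·|^q -/

noncomputable def sg (q a : ℝ) : ℝ :=
  if 0 < a then q * a ^ (q - 1) else if a < 0 then -(q * (-a) ^ (q - 1)) else 0

lemma sg_mono {q : ℝ} (hq : 1 ≤ q) : Monotone (sg q) := by
  have hco : ∀ a : ℝ, 0 < a → 0 ≤ q * a ^ (q - 1) := fun a ha =>
    mul_nonneg (by linarith) (Real.rpow_nonneg ha.le _)
  intro a b hab
  unfold sg
  rcases lt_trichotomy a 0 with ha | ha | ha
  · rw [if_neg (by linarith), if_pos ha]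
    rcases lt_trichotomy b 0 with hb | hb | hb
    · rw [if_neg (by linarith), if_pos hb]
      have h1 : (-b) ^ (q - 1) ≤ (-a) ^ (q - 1) :=
        Real.rpow_le_rpow (by linarith) (by linarith) (by linarith)
      have h2 : q * (-b) ^ (q - 1) ≤ q * (-a) ^ (q - 1) :=
        mul_le_mul_of_nonneg_left h1 (by linarith)
      linarith
    · subst hb
      rw [if_neg (lt_irrefl (0:ℝ)), if_neg (lt_irrefl (0:ℝ))]
      linarith [hco (-a) (by linarith)]
    · rw [if_pos hb]
      linarith [hco (-a) (by linarith), hco b hb]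
  · subst ha
    rw [if_neg (lt_irrefl 0), if_neg (not_lt.mpr le_rfl)]
    rcases lt_or_ge 0 b with hb | hb
    · rw [if_pos hb]; exact hco b hb
    · rw [if_neg (not_lt.mpr hb), if_neg (by linarith)]
  · rw [if_pos ha, if_pos (by linarith : (0:ℝ) < b)]
    have h1 : a ^ (q - 1) ≤ b ^ (q - 1) :=
      Real.rpow_le_rpow ha.le hab (by linarith)
    exact mul_le_mul_of_nonneg_left h1 (by linarith)

lemma bernoulli_pow {q : ℝ} (hq : 1 ≤ q) {a b : ℝ} (ha : 0 < a) (hb : 0 ≤ b) :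
    a ^ q + q * a ^ (q - 1) * (b - a) ≤ b ^ q := by
  have hs : (-1 : ℝ) ≤ b / a - 1 := by
    have : 0 ≤ b / a := div_nonneg hb ha.le
    linarith
  have h1 : 1 + q * (b / a - 1) ≤ (1 + (b / a - 1)) ^ q :=
    one_add_mul_self_le_rpow_one_add hs hq
  have h1' : 1 + q * (b / a - 1) ≤ (b / a) ^ q := by
    have : (1 : ℝ) + (b / a - 1) = b / a := by ring
    rwa [this] at h1
  have hapow : (0 : ℝ) < a ^ q := Real.rpow_pos_of_pos ha q
  have h2 : a ^ q * (1 + q * (b / a - 1)) ≤ a ^ q * (b / a) ^ q :=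
    mul_le_mul_of_nonneg_left h1' hapow.le
  have h3 : a ^ q * (b / a) ^ q = b ^ q := by
    rw [← Real.mul_rpow ha.le (div_nonneg hb ha.le)]
    congr 1
    field_simp
  have h4 : a ^ q * (1 + q * (b / a - 1)) = a ^ q + q * a ^ (q - 1) * (b - a) := by
    rw [Real.rpow_sub ha, Real.rpow_one]
    field_simp
  rw [h3, h4] at h2
  exact h2

lemma sg_subgrad {q : ℝ} (hq : 1 ≤ q) (a b : ℝ) :
    |a| ^ q + sg q a * (b - a) ≤ |b| ^ q := by
  have hco : ∀ c : ℝ, 0 < c → 0 ≤ q * c ^ (q - 1) := fun c hc =>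
    mul_nonneg (by linarith) (Real.rpow_nonneg hc.le _)
  unfold sg
  rcases lt_trichotomy a 0 with ha | ha | ha
  · rw [if_neg (by linarith), if_pos ha, abs_of_neg ha]
    have key := bernoulli_pow hq (show (0:ℝ) < -a by linarith) (abs_nonneg b)
    have hle : b - a ≥ -(|b|) - a := by linarith [neg_abs_le b]
    have h5 : -(q * (-a) ^ (q - 1)) * (b - a) ≤ -(q * (-a) ^ (q - 1)) * (-(|b|) - a) := by
      apply mul_le_mul_of_nonpos_left _ (by linarith [hco (-a) (show (0:ℝ) < -a by linarith)])
      linarith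
    have heq : -(q * (-a) ^ (q - 1)) * (-(|b|) - a) = q * (-a) ^ (q - 1) * (|b| - (-a)) := by
      ring
    rw [heq] at h5
    linarith [key, h5]
  · subst ha
    rw [if_neg (lt_irrefl 0), if_neg (not_lt.mpr le_rfl), abs_zero,
      Real.zero_rpow (by linarith : q ≠ 0)]
    simpa using Real.rpow_nonneg (abs_nonneg b) q
  · rw [if_pos ha, abs_of_pos ha]
    have key := bernoulli_pow hq ha (abs_nonneg b)
    have h5 : q * a ^ (q - 1) * (b - a) ≤ q * a ^ (q - 1) * (|b| - a) := by
      apply mul_le_mul_of_nonneg_left _ (hco a ha)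
      linarith [le_abs_self b]
    linarith [key, h5]

lemma exists_perm_of_mset {f g : Fin n → ℝ} (h : mset f = mset g) :
    ∃ e : Equiv.Perm (Fin n), f = g ∘ e := by
  have hd : dsort f = dsort g :=
    antitone_unique (antitone_dsort f) (antitone_dsort g)
      (by rw [mset_dsort, mset_dsort, h])
  refine ⟨Equiv.trans (dperm f)⁻¹ (dperm g), ?_⟩
  funext i
  have h1 : f i = dsort f ((dperm f)⁻¹ i) := by
    unfold dsort
    simp [Function.comp_apply]
  rw [h1, hd]
  rfl

lemma indicator_of_antitone_01 {g : Fin n → ℝ} (hg : Antitone g)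
    (h01 : ∀ i, g i = 0 ∨ g i = 1) (k : Fin n) :
    g k = if (k : ℕ) < (Finset.univ.filter fun j => g j = 1).card then 1 else 0 := by
  classical
  set S := Finset.univ.filter fun j => g j = 1 with hS
  have hdown : ∀ j k : Fin n, j ≤ k → k ∈ S → j ∈ S := by
    intro j k hjk hk
    rw [hS, Finset.mem_filter] at hk ⊢
    refine ⟨Finset.mem_univ _, ?_⟩
    have := hg hjk
    rcases h01 j with h | h
    · rw [hk.2] at this; linarith [h ▸ this]
    · exact h
  have hmem : ∀ k : Fin n, k ∈ S ↔ (k : ℕ) < S.card := by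
    intro k
    constructor
    · intro hk
      have hsub : Finset.Iic k ⊆ S := fun j hj => hdown j k (Finset.mem_Iic.mp hj) hk
      have := Finset.card_le_card hsub
      rw [Fin.card_Iic] at this
      omega
    · intro hk
      by_contra hns
      have hsub : S ⊆ Finset.Iio k := by
        intro j hj
        rw [Finset.mem_Iio]
        by_contra hjk
        exact hns (hdown k j (not_lt.mp hjk) hj)
      have := Finset.card_le_card hsub
      rw [Fin.card_Iio] at this
      omega
  by_cases hk : (k : ℕ) < S.card
  · rw [if_pos hk]
    have := (hmem k).mpr hk
    rw [hS, Finset.mem_filter] at this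
    exact this.2
  · rw [if_neg hk]
    have hns := fun h => hk ((hmem k).mp h)
    rcases h01 k with h | h
    · exact h
    · exact absurd (by rw [hS, Finset.mem_filter]; exact ⟨Finset.mem_univ _, h⟩) hns

/-! ### norms -/

lemma pnorm_le (p : ENNReal) [Fact (1 ≤ p)] (x y : Fin n → ℝ)
    (hq : ∀ q : ℝ, 1 ≤ q → ∑ i, |x i| ^ q ≤ ∑ i, |y i| ^ q)
    (hsup : ∀ i : Fin n, ∃ j, |x i| ≤ |y j|) :
    ‖(WithLp.equiv p (Fin n → ℝ)).symm x‖ ≤ ‖(WithLp.equiv p (Fin n → ℝ)).symm y‖ := by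
  rcases eq_or_ne p (⊤ : ENNReal) with hp | hp
  · subst hp
    rw [PiLp.norm_eq_ciSup, PiLp.norm_eq_ciSup]
    rcases Nat.eq_zero_or_pos n with hn | hn
    · subst hn
      rw [Real.iSup_of_isEmpty, Real.iSup_of_isEmpty]
    · haveI : Nonempty (Fin n) := ⟨⟨0, hn⟩⟩
      apply ciSup_le
      intro i
      obtain ⟨j, hj⟩ := hsup i
      refine le_trans ?_ (le_ciSup (Set.Finite.bddAbove (Set.finite_range _)) j)
      simpa [WithLp.equiv_symm_apply, PiLp.toLp_apply, Real.norm_eq_abs] using hj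
  · have hq1 : 1 ≤ p.toReal := by
      have h1 := Fact.out (p := 1 ≤ p)
      have := ENNReal.toReal_mono hp h1
      simpa using this
    have hpos : 0 < p.toReal := lt_of_lt_of_le one_pos hq1
    rw [PiLp.norm_eq_sum hpos, PiLp.norm_eq_sum hpos]
    apply Real.rpow_le_rpow (Finset.sum_nonneg fun i _ =>
      Real.rpow_nonneg (norm_nonneg _) _) ?_ (by positivity)
    have := hq p.toReal hq1
    simpa [WithLp.equiv_symm_apply, PiLp.toLp_apply, Real.norm_eq_abs] using this

lemma pnorm_comp_perm (p : ENNReal) [Fact (1 ≤ p)] (g : Fin n → ℝ) (e : Equiv.Perm (Fin n)) :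
    ‖(WithLp.equiv p (Fin n → ℝ)).symm (g ∘ e)‖ = ‖(WithLp.equiv p (Fin n → ℝ)).symm g‖ := by
  apply le_antisymm
  · apply pnorm_le
    · intro q hq
      have := Equiv.sum_comp e (fun k => |g k| ^ q)
      simp only [Function.comp_apply]
      exact le_of_eq this
    · intro i
      exact ⟨e i, le_refl _⟩
  · apply pnorm_le
    · intro q hq
      have := Equiv.sum_comp e (fun k => |g k| ^ q)
      simp only [Function.comp_apply]
      exact le_of_eq this.symm
    · intro i
      exact ⟨e⁻¹ i, by simp⟩

lemma card_filter_lt {m : ℕ} (hm : m ≤ n) :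
    (Finset.univ.filter fun j : Fin n => (j : ℕ) < m).card = m := by
  have he : (Finset.univ.filter fun j : Fin n => (j : ℕ) < m)
      = Finset.map ⟨Fin.castLE hm, Fin.castLE_injective hm⟩ Finset.univ := by
    ext j
    simp only [Finset.mem_filter, Finset.mem_univ, true_and, Finset.mem_map,
      Function.Embedding.coeFn_mk]
    constructor
    · intro hj
      exact ⟨⟨(j : ℕ), hj⟩, by ext; rfl⟩
    · rintro ⟨i, rfl⟩
      exact lt_of_lt_of_le i.2 le_rfl
  rw [he, Finset.card_map, Finset.card_univ, Fintype.card_fin]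

end S17

open S17 in
theorem stmt_17' (p : ENNReal) [Fact (1 ≤ p)] (n d : ℕ)
    (U : Matrix (Fin n) (Fin n) ℝ) (hU : U * Uᵀ = 1)
    (lam : Fin n → ℝ) (hlam : Antitone lam)
    (P : Matrix (Fin n) (Fin n) ℝ) (hP : P = U * Matrix.diagonal lam * Uᵀ)
    (lamHat : Fin n → ℝ)
    (hlamHat : ∀ k : Fin n, lamHat k = if (k : ℕ) < d ∧ (1 : ℝ) / 2 ≤ lam k then 1 else 0) :
    let Pi := U * Matrix.diagonal lamHat * Uᵀ
    (Pi.IsHermitian ∧ Pi * Pi = Pi ∧ Pi.trace ≤ (d : ℝ)) ∧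
    ∀ Pi' : Matrix (Fin n) (Fin n) ℝ, Pi'.IsHermitian → Pi' * Pi' = Pi' →
      Pi'.trace ≤ (d : ℝ) →
      ∀ (hΔ : (P - Pi).IsHermitian) (hΔ' : (P - Pi').IsHermitian),
        ‖(WithLp.equiv p (Fin n → ℝ)).symm hΔ.eigenvalues‖
          ≤ ‖(WithLp.equiv p (Fin n → ℝ)).symm hΔ'.eigenvalues‖ := by
  intro Pi
  have hUtU : Uᵀ * U = 1 := mul_eq_one_comm.mp hU
  have hermConj : ∀ g : Fin n → ℝ, (U * Matrix.diagonal g * Uᵀ).IsHermitian := by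
    intro g
    unfold Matrix.IsHermitian
    rw [S17.ctr, transpose_mul, transpose_mul, transpose_transpose, diagonal_transpose, mul_assoc]
  have hermPi : Pi.IsHermitian := hermConj lamHat
  have hermP : P.IsHermitian := by rw [hP]; exact hermConj lam
  have hsq : (fun k => lamHat k * lamHat k) = lamHat := by
    funext k
    rw [hlamHat k]
    by_cases h : (k : ℕ) < d ∧ (1 : ℝ) / 2 ≤ lam k
    · rw [if_pos h]; norm_num
    · rw [if_neg h]; norm_num
  have hidemPi : Pi * Pi = Pi := by
    show (U * Matrix.diagonal lamHat * Uᵀ) * (U * Matrix.diagonal lamHat * Uᵀ)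
      = U * Matrix.diagonal lamHat * Uᵀ
    rw [show (U * Matrix.diagonal lamHat * Uᵀ) * (U * Matrix.diagonal lamHat * Uᵀ)
        = U * Matrix.diagonal lamHat * (Uᵀ * U) * Matrix.diagonal lamHat * Uᵀ from by
          noncomm_ring,
      hUtU, mul_one, mul_assoc U (Matrix.diagonal lamHat) (Matrix.diagonal lamHat),
      diagonal_mul_diagonal, hsq]
  have htracePi : Pi.trace ≤ (d : ℝ) := by
    have h1 : Pi.trace = ∑ k, lamHat k := S17.trace_eq_sum hU rfl
    have h2 : ∑ k, lamHat k
        = ((Finset.univ.filter fun k : Fin n => (k : ℕ) < d ∧ (1 : ℝ) / 2 ≤ lam k).card : ℝ) := by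
      rw [Finset.sum_congr rfl (fun k _ => hlamHat k), Finset.sum_boole]
    have h3 : (Finset.univ.filter fun k : Fin n =>
        (k : ℕ) < d ∧ (1 : ℝ) / 2 ≤ lam k).card ≤ d := by
      have h4 : (Finset.univ.filter fun k : Fin n =>
          (k : ℕ) < d ∧ (1 : ℝ) / 2 ≤ lam k).card ≤ (Finset.range d).card :=
        Finset.card_le_card_of_injOn (fun k : Fin n => (k : ℕ))
          (fun k hk => Finset.mem_range.mpr (Finset.mem_filter.mp hk).2.1)
          (fun a _ b _ hab => Fin.val_injective hab)
      simpa [Finset.card_range] using h4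
    rw [h1, h2]
    exact_mod_cast h3
  refine ⟨⟨hermPi, hidemPi, htracePi⟩, ?_⟩
  intro Pi' hPi' hidem' htr' hΔ hΔ'
  -- sorted eigenvalues of P are lam
  have devP : S17.dsort hermP.eigenvalues = lam :=
    S17.antitone_unique (S17.antitone_dsort _) hlam
      (by rw [S17.mset_dsort]; exact S17.mset_eigenvalues hermP hU hP)
  -- eigenvalues of Pi' are 0/1
  set μ := hPi'.eigenvalues with hμdef
  set W := (hPi'.eigenvectorUnitary : Matrix (Fin n) (Fin n) ℝ) with hWdef
  have hW'o : W * Wᵀ = 1 := S17.eU_mul_transpose hPi'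
  have hW'oT : Wᵀ * W = 1 := mul_eq_one_comm.mp hW'o
  have cancelW : ∀ X Y : Matrix (Fin n) (Fin n) ℝ, W * X * Wᵀ = W * Y * Wᵀ → X = Y := by
    intro X Y hXY
    have h0 := congrArg (fun M => Wᵀ * M * W) hXY
    rw [show Wᵀ * (W * X * Wᵀ) * W = (Wᵀ * W) * X * (Wᵀ * W) from by noncomm_ring,
      show Wᵀ * (W * Y * Wᵀ) * W = (Wᵀ * W) * Y * (Wᵀ * W) from by noncomm_ring,
      hW'oT, one_mul, one_mul, mul_one, mul_one] at h0
    exact h0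
  have h01 : ∀ i, μ i = 0 ∨ μ i = 1 := by
    intro i
    have hspec : Pi' = W * Matrix.diagonal μ * Wᵀ := S17.spectral_real hPi'
    have h2 : W * (Matrix.diagonal μ * Matrix.diagonal μ) * Wᵀ = W * Matrix.diagonal μ * Wᵀ := by
      calc W * (Matrix.diagonal μ * Matrix.diagonal μ) * Wᵀ
          = (W * Matrix.diagonal μ * Wᵀ) * (W * Matrix.diagonal μ * Wᵀ) := by
            rw [show (W * Matrix.diagonal μ * Wᵀ) * (W * Matrix.diagonal μ * Wᵀ)
              = W * Matrix.diagonal μ * (Wᵀ * W) * Matrix.diagonal μ * Wᵀ from by noncomm_ring,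
              hW'oT, mul_one]
            noncomm_ring
        _ = Pi' := by rw [← hspec, hidem']
        _ = W * Matrix.diagonal μ * Wᵀ := hspec
    have h3 := cancelW _ _ h2
    rw [diagonal_mul_diagonal] at h3
    have h4 : μ i * μ i = μ i := by
      have := congrArg (fun M => M i i) h3
      simpa using this
    have h5 : μ i * (μ i - 1) = 0 := by ring_nf; linear_combination h4
    rcases mul_eq_zero.mp h5 with h | h
    · exact Or.inl h
    · exact Or.inr (by linarith [sub_eq_zero.mp h])
  -- sorted eigenvalues of Pi' are an indicator
  set m := (Finset.univ.filter fun j : Fin n => S17.dsort μ j = 1).card with hmdef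
  have hβ : ∀ k : Fin n, S17.dsort μ k = if (k : ℕ) < m then 1 else 0 :=
    S17.indicator_of_antitone_01 (S17.antitone_dsort μ) (fun i => h01 _)
  have hmn : m ≤ n := by
    rw [hmdef]
    calc (Finset.univ.filter fun j : Fin n => S17.dsort μ j = 1).card
        ≤ Finset.univ.card := Finset.card_le_card (Finset.filter_subset _ _)
      _ = n := by rw [Finset.card_univ, Fintype.card_fin]
  have hsumμ : ∑ i, μ i = (m : ℝ) := by
    have h0 : ∑ i, μ i = ∑ i, S17.dsort μ i := (S17.sum_dsort μ).symm
    rw [h0, Finset.sum_congr rfl (fun k _ => hβ k), Finset.sum_boole]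
    norm_cast
    exact S17.card_filter_lt hmn
  have hmdn : m ≤ d := by
    have ht : Pi'.trace = ∑ i, μ i := S17.trace_eq_sum_ev hPi'
    rw [ht, hsumμ] at htr'
    exact_mod_cast htr'
  set β : Fin n → ℝ := fun k => if (k : ℕ) < m then 1 else 0 with hβdef
  have devPi' : S17.dsort μ = β := funext hβ
  -- majorization
  set ν := hΔ'.eigenvalues with hνdef
  have hmaj : S17.Maj (fun i => lam i - β i) ν := by
    constructor
    · intro S
      have := S17.lidskii hermP hPi' hΔ' S
      rwa [devP, devPi'] at this
    · have := S17.lidskii_total hermP hPi' hΔ'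
      rwa [devP, devPi'] at this
  -- pointwise comparison
  have hpt : ∀ k : Fin n, |lam k - lamHat k| ≤ |lam k - β k| := by
    intro k
    rw [hlamHat k]
    simp only [hβdef]
    by_cases hc : (k : ℕ) < d ∧ (1 : ℝ) / 2 ≤ lam k
    · rw [if_pos hc]
      by_cases hb : (k : ℕ) < m
      · rw [if_pos hb]
      · rw [if_neg hb, sub_zero]
        have hhalf := hc.2
        have h2 : |lam k| = lam k := abs_of_nonneg (by linarith)
        rw [h2]
        exact abs_le.mpr ⟨by linarith, by linarith⟩
    · rw [if_neg hc, sub_zero]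
      by_cases hb : (k : ℕ) < m
      · rw [if_pos hb]
        have hlt : lam k < 1 / 2 := by
          by_contra hge
          exact hc ⟨lt_of_lt_of_le hb hmdn, by linarith⟩
        have h2 : |lam k - 1| = -(lam k - 1) := abs_of_nonpos (by linarith)
        rw [h2]
        exact abs_le.mpr ⟨by linarith, by linarith⟩
      · rw [if_neg hb, sub_zero]
  -- the norm chain
  have hPmPi : P - Pi = U * Matrix.diagonal (fun i => lam i - lamHat i) * Uᵀ := by
    have hdd : Matrix.diagonal (fun i => lam i - lamHat i)
        = Matrix.diagonal lam - Matrix.diagonal lamHat := by rw [diagonal_sub]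
    show P - U * Matrix.diagonal lamHat * Uᵀ = _
    rw [hP, hdd]
    noncomm_ring
  obtain ⟨e, he⟩ := S17.exists_perm_of_mset (S17.mset_eigenvalues hΔ hU hPmPi)
  have hsupfinal : ∀ i : Fin n, ∃ j, |lam i - β i| ≤ |ν j| := by
    intro i
    have hn : 0 < n := i.pos
    have hup := hmaj.upper i
    have hlo := hmaj.lower i
    rcases le_total 0 (lam i - β i) with hs | hs
    · refine ⟨S17.dperm ν ⟨0, hn⟩, ?_⟩
      have hne : S17.nsort ν 0 = ν (S17.dperm ν ⟨0, hn⟩) := by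
        unfold S17.nsort
        rw [dif_pos hn]
        rfl
      rw [abs_of_nonneg hs]
      calc lam i - β i ≤ S17.nsort ν 0 := hup
        _ = ν (S17.dperm ν ⟨0, hn⟩) := hne
        _ ≤ |ν (S17.dperm ν ⟨0, hn⟩)| := le_abs_self _
    · refine ⟨S17.dperm ν ⟨n - 1, by omega⟩, ?_⟩
      have hne : S17.nsort ν (n - 1) = ν (S17.dperm ν ⟨n - 1, by omega⟩) := by
        unfold S17.nsort
        rw [dif_pos (show n - 1 < n by omega)]
        rfl
      rw [abs_of_nonpos hs]
      calc -(lam i - β i) ≤ -(S17.nsort ν (n - 1)) := by linarith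
        _ = -(ν (S17.dperm ν ⟨n - 1, by omega⟩)) := by rw [hne]
        _ ≤ |ν (S17.dperm ν ⟨n - 1, by omega⟩)| := neg_le_abs _
  calc ‖(WithLp.equiv p (Fin n → ℝ)).symm hΔ.eigenvalues‖
      = ‖(WithLp.equiv p (Fin n → ℝ)).symm ((fun i => lam i - lamHat i) ∘ e)‖ := by rw [he]
    _ = ‖(WithLp.equiv p (Fin n → ℝ)).symm (fun i => lam i - lamHat i)‖ :=
        S17.pnorm_comp_perm p _ e
    _ ≤ ‖(WithLp.equiv p (Fin n → ℝ)).symm (fun i => lam i - β i)‖ :=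
        S17.pnorm_le p _ _
          (fun q hq => Finset.sum_le_sum fun i _ =>
            Real.rpow_le_rpow (abs_nonneg _) (hpt i) (by linarith))
          (fun i => ⟨i, hpt i⟩)
    _ ≤ ‖(WithLp.equiv p (Fin n → ℝ)).symm ν‖ :=
        S17.pnorm_le p _ _
          (fun q hq => hmaj.sum_phi (fun a b => S17.sg_subgrad hq a b) (S17.sg_mono hq))
          hsupfinal


open Matrix

/-- Schatten p-norm (1 ≤ p ≤ ∞) of a symmetric real matrix: the ℓ^p norm of its eigenvalue
vector. -/
noncomputable def schattenNorm (p : ENNReal) [Fact (1 ≤ p)] {n : ℕ}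
    (M : Matrix (Fin n) (Fin n) ℝ) (hM : M.IsHermitian) : ℝ :=
  ‖(WithLp.equiv p (Fin n → ℝ)).symm hM.eigenvalues‖

/-- Projection onto the orthoprojectors of rank at most d: if P = U diag(λ) Uᵀ with U
orthogonal and λ in descending order, then for every Schatten p-norm (1 ≤ p ≤ ∞) a nearest
point of O_d = {Π symmetric : Π² = Π, tr Π ≤ d} to P is Π = U diag(λ̂) Uᵀ with λ̂_k = 1 iff
k ≤ d and λ_k ≥ 1/2. -/
theorem stmt_17 (p : ENNReal) [Fact (1 ≤ p)] (n d : ℕ)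
    (U : Matrix (Fin n) (Fin n) ℝ) (hU : U * Uᵀ = 1)
    (lam : Fin n → ℝ) (hlam : Antitone lam)
    (P : Matrix (Fin n) (Fin n) ℝ) (hP : P = U * Matrix.diagonal lam * Uᵀ)
    (lamHat : Fin n → ℝ)
    (hlamHat : ∀ k : Fin n, lamHat k = if (k : ℕ) < d ∧ (1 : ℝ) / 2 ≤ lam k then 1 else 0) :
    let Pi := U * Matrix.diagonal lamHat * Uᵀ
    (Pi.IsHermitian ∧ Pi * Pi = Pi ∧ Pi.trace ≤ (d : ℝ)) ∧
    ∀ Pi' : Matrix (Fin n) (Fin n) ℝ, Pi'.IsHermitian → Pi' * Pi' = Pi' →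
      Pi'.trace ≤ (d : ℝ) →
      ∀ (hΔ : (P - Pi).IsHermitian) (hΔ' : (P - Pi').IsHermitian),
        schattenNorm p (P - Pi) hΔ ≤ schattenNorm p (P - Pi') hΔ' := by
  exact stmt_17' p n d U hU lam hlam P hP lamHat hlamHat
end

section
/- Let x_1,…,x_N ∈ R^n and let a hyperplane {x : ⟨a,x⟩ = β} (with unit normal a) minimize the sum of Euclidean distances E = Σ_k |⟨a,x_k⟩ − β| over all hyperplanes. Let M, M₊, M₋ be the number of data points with ⟨a,x_k⟩ equal to, greater than, and less than β respectively. Then |M₊ − M₋| ≤ M; in particular if N is odd the minimizing hyperplane contains at least one data point. -/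
/-- If the hyperplane {x : ⟨a,x⟩ = β} (unit normal a) minimizes the sum of Euclidean
distances to data points x₁,…,x_N, and M, M₊, M₋ count the points on, strictly above, and
strictly below the hyperplane, then |M₊ − M₋| ≤ M; in particular if N is odd the hyperplane
contains at least one data point. -/
theorem stmt_18 (n N : ℕ) (x : Fin N → EuclideanSpace ℝ (Fin n))
    (a : EuclideanSpace ℝ (Fin n)) (β : ℝ) (ha : ‖a‖ = 1)
    (hmin : ∀ (a' : EuclideanSpace ℝ (Fin n)) (β' : ℝ), ‖a'‖ = 1 →
      (∑ k, |(inner ℝ a (x k) : ℝ) - β|) ≤ ∑ k, |(inner ℝ a' (x k) : ℝ) - β'|) :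
    let M := (Finset.univ.filter fun k => (inner ℝ a (x k) : ℝ) = β).card
    let Mp := (Finset.univ.filter fun k => β < (inner ℝ a (x k) : ℝ)).card
    let Mm := (Finset.univ.filter fun k => (inner ℝ a (x k) : ℝ) < β).card
    |(Mp : ℤ) - (Mm : ℤ)| ≤ (M : ℤ) ∧ (Odd N → 1 ≤ M) := by
  classical
  intro M Mp Mm
  set y : Fin N → ℝ := fun k => inner ℝ a (x k) with hy
  -- choose a small positive ε
  obtain ⟨ε, hεpos, hεle⟩ : ∃ ε > (0:ℝ), ∀ k, y k ≠ β → ε ≤ |y k - β| := by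
    set T := Finset.univ.filter (fun k => y k ≠ β) with hT
    by_cases hTne : T.Nonempty
    · refine ⟨T.inf' hTne (fun k => |y k - β|), ?_, ?_⟩
      · rw [gt_iff_lt, Finset.lt_inf'_iff]
        intro k hk
        simp only [hT, Finset.mem_filter] at hk
        exact abs_pos.mpr (sub_ne_zero.mpr hk.2)
      · intro k hk
        exact Finset.inf'_le _ (by simp [hT, hk])
    · exact ⟨1, one_pos, fun k hk => absurd ⟨k, by simp [hT, hk]⟩ hTne⟩
  -- cardinality facts
  have hcard1 : (Finset.univ.filter fun k => ¬ β < y k).card = M + Mm := by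
    have he : (Finset.univ.filter fun k => ¬ β < y k)
        = (Finset.univ.filter fun k => y k = β) ∪ (Finset.univ.filter fun k => y k < β) := by
      rw [← Finset.filter_or]
      apply Finset.filter_congr
      intro k _
      constructor
      · intro h
        rcases lt_or_eq_of_le (not_lt.mp h) with h' | h'
        · exact Or.inr h'
        · exact Or.inl h'
      · rintro (h | h) <;> simp [h] <;> linarith
    rw [he, Finset.card_union_of_disjoint]
    rw [Finset.disjoint_left]
    intro k hk1 hk2
    simp only [Finset.mem_filter] at hk1 hk2
    linarith [hk1.2, hk2.2, le_of_eq hk1.2]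
  have hcard2 : (Finset.univ.filter fun k => ¬ y k < β).card = M + Mp := by
    have he : (Finset.univ.filter fun k => ¬ y k < β)
        = (Finset.univ.filter fun k => y k = β) ∪ (Finset.univ.filter fun k => β < y k) := by
      rw [← Finset.filter_or]
      apply Finset.filter_congr
      intro k _
      constructor
      · intro h
        rcases lt_or_eq_of_le (not_lt.mp h) with h' | h'
        · exact Or.inr h'
        · exact Or.inl h'.symm
      · rintro (h | h) <;> simp [h] <;> linarith
    rw [he, Finset.card_union_of_disjoint]
    rw [Finset.disjoint_left]
    intro k hk1 hk2
    simp only [Finset.mem_filter] at hk1 hk2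
    linarith [hk1.2, hk2.2, le_of_eq hk1.2]
  have hcard3 : M + Mp + Mm = N := by
    have h1 : M + (Finset.univ.filter fun k => ¬ y k = β).card = N := by
      have := Finset.card_filter_add_card_filter_not
        (s := (Finset.univ : Finset (Fin N))) (p := fun k => y k = β)
      simpa using this
    have he : (Finset.univ.filter fun k => ¬ y k = β)
        = (Finset.univ.filter fun k => β < y k) ∪ (Finset.univ.filter fun k => y k < β) := by
      rw [← Finset.filter_or]
      apply Finset.filter_congr
      intro k _
      constructor
      · intro h
        rcases lt_or_gt_of_ne h with h' | h'
        · exact Or.inr h'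
        · exact Or.inl h'
      · rintro (h | h) <;> intro hc <;> simp [hc] at h <;> linarith
    have h2 : (Finset.univ.filter fun k => ¬ y k = β).card = Mp + Mm := by
      rw [he, Finset.card_union_of_disjoint]
      rw [Finset.disjoint_left]
      intro k hk1 hk2
      simp only [Finset.mem_filter] at hk1 hk2
      linarith [hk1.2, hk2.2]
    omega
  -- key inequality from perturbing β upward
  have key1 : (Mp : ℝ) ≤ (M : ℝ) + (Mm : ℝ) := by
    have hsum : (∑ k, |y k - (β + ε)|)
        = (∑ k, |y k - β|) + ∑ k, (if β < y k then -ε else ε) := by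
      rw [← Finset.sum_add_distrib]
      apply Finset.sum_congr rfl
      intro k _
      by_cases h : β < y k
      · have h1 : ε ≤ y k - β := by
          have := hεle k (ne_of_gt h)
          rw [abs_of_pos (by linarith)] at this
          exact this
        rw [if_pos h, abs_of_nonneg (by linarith), abs_of_nonneg (by linarith)]
        ring
      · have h2 : y k ≤ β := not_lt.mp h
        rw [if_neg h, abs_of_nonpos (by linarith), abs_of_nonpos (by linarith)]
        ring
    have hle := hmin a (β + ε) ha
    rw [hsum] at hle
    have h0 : (0:ℝ) ≤ ∑ k, (if β < y k then -ε else ε) := by linarith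
    rw [Finset.sum_ite, Finset.sum_const, Finset.sum_const, hcard1] at h0
    have : (0:ℝ) ≤ (Mp : ℝ) * (-ε) + ((M : ℝ) + (Mm : ℝ)) * ε := by
      push_cast at h0 ⊢
      convert h0 using 2 <;> ring_nf <;> simp [nsmul_eq_mul] <;> ring
    nlinarith [hεpos]
  have key2 : (Mm : ℝ) ≤ (M : ℝ) + (Mp : ℝ) := by
    have hsum : (∑ k, |y k - (β - ε)|)
        = (∑ k, |y k - β|) + ∑ k, (if y k < β then -ε else ε) := by
      rw [← Finset.sum_add_distrib]
      apply Finset.sum_congr rfl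
      intro k _
      by_cases h : y k < β
      · have h1 : ε ≤ β - y k := by
          have := hεle k (ne_of_lt h)
          rw [abs_of_neg (by linarith)] at this
          linarith
        rw [if_pos h, abs_of_nonpos (by linarith), abs_of_nonpos (by linarith)]
        ring
      · have h2 : β ≤ y k := not_lt.mp h
        rw [if_neg h, abs_of_nonneg (by linarith), abs_of_nonneg (by linarith)]
        ring
    have hle := hmin a (β - ε) ha
    rw [hsum] at hle
    have h0 : (0:ℝ) ≤ ∑ k, (if y k < β then -ε else ε) := by linarith
    rw [Finset.sum_ite, Finset.sum_const, Finset.sum_const, hcard2] at h0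
    have : (0:ℝ) ≤ (Mm : ℝ) * (-ε) + ((M : ℝ) + (Mp : ℝ)) * ε := by
      push_cast at h0 ⊢
      convert h0 using 2 <;> ring_nf <;> simp [nsmul_eq_mul] <;> ring
    nlinarith [hεpos]
  have k1 : Mp ≤ M + Mm := by exact_mod_cast key1
  have k2 : Mm ≤ M + Mp := by exact_mod_cast key2
  constructor
  · rw [abs_sub_le_iff]
    constructor <;> [skip; skip] <;> omega
  · intro hodd
    rcases hodd with ⟨m, hm⟩
    omega
end
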